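/- arXiv:2104.13801 — 4 statements merged into one kernel-verified Lean document; each statement's English description precedes it below -/
import Mathlib

section
/- Let p_{0,1}(x) = 1/(π(1+x²)) and p_{1,1}(x) = 1/(π(1+(x−1)²)) be the Cauchy densities with parameters (l,s) = (0,1) and (1,1), and for θ ∈ (0,1) let m_θ = (1−θ)·p_{0,1} + θ·p_{1,1}. Then the negentropy admits the closed form: ∫_ℝ m_θ(x)·log m_θ(x) dx = θ·log( (2·√(1+θ−θ²)+θ+2) / (2·√(1+θ−θ²)−θ+3) ) + log( (2·√(1+θ−θ²)−θ+3) / (20·π) ). -/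
open MeasureTheory Real

open Filter Set Topology

lemma sqrt_add_le' (x y : ℝ) (hx : 0 ≤ x) (hy : 0 ≤ y) :
    Real.sqrt (x + y) ≤ Real.sqrt x + Real.sqrt y := by
  rw [show Real.sqrt x + Real.sqrt y = Real.sqrt ((Real.sqrt x + Real.sqrt y) ^ 2) from
    (Real.sqrt_sq (by positivity)).symm]
  apply Real.sqrt_le_sqrt
  nlinarith [Real.sq_sqrt hx, Real.sq_sqrt hy, Real.sqrt_nonneg x, Real.sqrt_nonneg y]

lemma abs_log_le (y : ℝ) (hy : 0 < y) : |Real.log y| ≤ y + y⁻¹ := by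
  rw [abs_le]
  constructor
  · have h1 : Real.log y⁻¹ ≤ y⁻¹ - 1 := Real.log_le_sub_one_of_pos (by positivity)
    rw [Real.log_inv] at h1
    nlinarith
  · have := Real.log_le_sub_one_of_pos hy
    nlinarith [inv_pos.mpr hy]

lemma abs_log_quarter (y : ℝ) (hy : 0 < y) :
    |Real.log y| ≤ 4 * (Real.sqrt (Real.sqrt y) + (Real.sqrt (Real.sqrt y))⁻¹) := by
  have hs : 0 < Real.sqrt (Real.sqrt y) := Real.sqrt_pos.mpr (Real.sqrt_pos.mpr hy)
  have hlog : Real.log y = 4 * Real.log (Real.sqrt (Real.sqrt y)) := by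
    rw [Real.log_sqrt (Real.sqrt_nonneg y), Real.log_sqrt hy.le]; ring
  rw [hlog, abs_mul, abs_of_nonneg (by norm_num : (0:ℝ) ≤ 4)]
  have := abs_log_le _ hs
  nlinarith [abs_nonneg (Real.log (Real.sqrt (Real.sqrt y)))]

lemma cauchy_integrable (l : ℝ) : Integrable fun x : ℝ => (1 + (x - l) ^ 2)⁻¹ :=
  integrable_inv_one_add_sq.comp_sub_right l

lemma cauchy_integral (l : ℝ) : ∫ x : ℝ, (1 + (x - l) ^ 2)⁻¹ = π := by
  rw [integral_sub_right_eq_self (fun u : ℝ => (1 + u ^ 2)⁻¹) l]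
  exact integral_univ_inv_one_add_sq

lemma sqrtabs_integrable : Integrable fun x : ℝ => Real.sqrt |x| * (1 + x ^ 2)⁻¹ := by
  have hjap : Integrable fun x : ℝ => ((1 : ℝ) + ‖x‖) ^ (-(3/2 : ℝ)) := by
    apply integrable_one_add_norm (E := ℝ); norm_num
  apply ((hjap.const_mul 2).mono' ?_ ?_)
  · exact ((Real.continuous_sqrt.comp continuous_abs).mul
      (Continuous.inv₀ (by continuity) fun x => by positivity)).aestronglyMeasurable
  · filter_upwards with x
    have h0 : (0:ℝ) < 1 + |x| := by positivity
    rw [Real.norm_eq_abs, abs_of_nonneg (by positivity), Real.norm_eq_abs]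
    have e1 : ((1:ℝ) + |x|) ^ (-(3/2 : ℝ)) = (1 + |x|) ^ ((1:ℝ)/2) * ((1 + |x|) ^ (2:ℕ))⁻¹ := by
      rw [← Real.rpow_natCast (1 + |x|) 2, ← Real.rpow_neg h0.le, ← Real.rpow_add h0]
      norm_num
    have hs : Real.sqrt |x| ≤ (1 + |x|) ^ ((1:ℝ)/2) := by
      rw [Real.sqrt_eq_rpow]
      exact Real.rpow_le_rpow (abs_nonneg x) (by linarith) (by norm_num)
    have hd : (1 + x ^ 2)⁻¹ ≤ ((1 + |x|) ^ (2:ℕ) / 2)⁻¹ := by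
      apply inv_anti₀ (by positivity)
      nlinarith [sq_abs x, sq_nonneg (1 - |x|)]
    rw [inv_div] at hd
    have h1 : (0:ℝ) ≤ (1 + |x|) ^ ((1:ℝ)/2) := by positivity
    calc Real.sqrt |x| * (1 + x ^ 2)⁻¹
        ≤ (1 + |x|) ^ ((1:ℝ)/2) * (2 / (1 + |x|) ^ (2:ℕ)) :=
          mul_le_mul hs hd (by positivity) h1
      _ = 2 * (((1:ℝ) + |x|) ^ ((1:ℝ)/2) * ((1 + |x|) ^ (2:ℕ))⁻¹) := by ring
      _ = 2 * ((1:ℝ) + |x|) ^ (-(3/2 : ℝ)) := by rw [e1]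

lemma sqrtabs_shift_integrable (a l : ℝ) :
    Integrable fun x : ℝ => Real.sqrt |x - a| * (1 + (x - l) ^ 2)⁻¹ := by
  have base : Integrable fun u : ℝ => Real.sqrt |u - (a - l)| * (1 + u ^ 2)⁻¹ := by
    apply (sqrtabs_integrable.add
      (integrable_inv_one_add_sq.const_mul (Real.sqrt |a - l|))).mono' ?_ ?_
    · have c1 : Continuous fun u : ℝ => Real.sqrt |u - (a - l)| :=
        Real.continuous_sqrt.comp (continuous_abs.comp (continuous_id.sub continuous_const))
      have c2 : Continuous fun u : ℝ => (1 + u ^ 2)⁻¹ :=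
        Continuous.inv₀ (by continuity) fun x => by positivity
      exact (c1.mul c2).aestronglyMeasurable
    · filter_upwards with u
      have hp : (0:ℝ) < 1 + u ^ 2 := by positivity
      rw [Real.norm_eq_abs, abs_of_nonneg (by positivity)]
      have h1 : Real.sqrt |u - (a - l)| ≤ Real.sqrt |u| + Real.sqrt |a - l| := by
        calc Real.sqrt |u - (a - l)| ≤ Real.sqrt (|u| + |a - l|) :=
              Real.sqrt_le_sqrt (abs_sub (u) (a - l))
          _ ≤ _ := sqrt_add_le' _ _ (abs_nonneg _) (abs_nonneg _)
      calc Real.sqrt |u - (a - l)| * (1 + u ^ 2)⁻¹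
          ≤ (Real.sqrt |u| + Real.sqrt |a - l|) * (1 + u ^ 2)⁻¹ := by
            apply mul_le_mul_of_nonneg_right h1 (by positivity)
        _ = Real.sqrt |u| * (1 + u ^ 2)⁻¹ + Real.sqrt |a - l| * (1 + u ^ 2)⁻¹ := by ring
  have := base.comp_sub_right l
  apply this.congr
  filter_upwards with x
  have : x - l - (a - l) = x - a := by ring
  rw [this]

lemma tendsto_inv_atBot_zero' : Tendsto (fun x : ℝ => x⁻¹) atBot (𝓝 0) := by
  have h1 : Tendsto (fun r : ℝ => r⁻¹) atTop (𝓝 0) := tendsto_inv_atTop_zero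
  have h2 : Tendsto (fun x : ℝ => -x) atBot atTop := tendsto_neg_atBot_atTop
  have h := (h1.comp h2).neg
  rw [neg_zero] at h
  apply h.congr
  intro x
  simp only [Function.comp_apply]; rw [inv_neg, neg_neg]

lemma aux_tendsto (φ : ℝ → ℝ) (hφ : ContinuousAt φ 0) (f : ℝ → ℝ)
    (heq : ∀ x : ℝ, x ≠ 0 → f x = φ x⁻¹) :
    Tendsto f atTop (𝓝 (φ 0)) ∧ Tendsto f atBot (𝓝 (φ 0)) := by
  constructor
  · apply Tendsto.congr' ?_ (hφ.tendsto.comp tendsto_inv_atTop_zero)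
    filter_upwards [eventually_ne_atTop (0:ℝ)] with x hx using (heq x hx).symm
  · apply Tendsto.congr' ?_ (hφ.tendsto.comp tendsto_inv_atBot_zero')
    filter_upwards [eventually_ne_atBot (0:ℝ)] with x hx using (heq x hx).symm

lemma log_integrable (a b l : ℝ) (hb : 0 < b) :
    Integrable fun x : ℝ => (1 + (x - l) ^ 2)⁻¹ * Real.log ((x - a) ^ 2 + b ^ 2) := by
  have hW : ∀ x : ℝ, 0 < (x - a) ^ 2 + b ^ 2 := fun x => by positivity
  have hP : ∀ x : ℝ, 0 < 1 + (x - l) ^ 2 := fun x => by positivity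
  have hmeas : AEStronglyMeasurable
      (fun x : ℝ => (1 + (x - l) ^ 2)⁻¹ * Real.log ((x - a) ^ 2 + b ^ 2)) volume := by
    have c1 : Continuous fun x : ℝ => (1 + (x - l) ^ 2)⁻¹ :=
      Continuous.inv₀ (by continuity) fun x => (hP x).ne'
    have c2 : Continuous fun x : ℝ => Real.log ((x - a) ^ 2 + b ^ 2) :=
      Continuous.log (by continuity) fun x => (hW x).ne'
    exact (c1.mul c2).aestronglyMeasurable
  -- dominating function
  have hdom : Integrable fun x : ℝ =>
      (Real.sqrt |x - a| * (1 + (x - l) ^ 2)⁻¹) * 4 +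
        (1 + (x - l) ^ 2)⁻¹ * (4 * (Real.sqrt b + b⁻¹ * Real.sqrt b + (Real.sqrt b)⁻¹)) :=
    ((sqrtabs_shift_integrable a l).mul_const 4).add ((cauchy_integrable l).mul_const _)
  apply hdom.mono' hmeas
  filter_upwards with x
  rw [Real.norm_eq_abs, abs_mul, abs_of_nonneg (by positivity : (0:ℝ) ≤ (1 + (x - l) ^ 2)⁻¹)]
  set W : ℝ := (x - a) ^ 2 + b ^ 2 with hWdef
  have hWpos : 0 < W := hW x
  have hkey : |Real.log W| ≤ 4 * Real.sqrt |x - a| +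
      4 * (Real.sqrt b + b⁻¹ * Real.sqrt b + (Real.sqrt b)⁻¹) := by
    have h1 := abs_log_quarter W hWpos
    have hsb : 0 < Real.sqrt b := Real.sqrt_pos.mpr hb
    have hup : Real.sqrt (Real.sqrt W) ≤ Real.sqrt |x - a| + Real.sqrt b := by
      have hsW : Real.sqrt W ≤ |x - a| + b := by
        calc Real.sqrt W ≤ Real.sqrt ((x - a) ^ 2) + Real.sqrt (b ^ 2) :=
              sqrt_add_le' _ _ (by positivity) (by positivity)
          _ = |x - a| + b := by rw [Real.sqrt_sq_eq_abs, Real.sqrt_sq hb.le]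
      calc Real.sqrt (Real.sqrt W) ≤ Real.sqrt (|x - a| + b) := Real.sqrt_le_sqrt hsW
        _ ≤ Real.sqrt |x - a| + Real.sqrt b := sqrt_add_le' _ _ (abs_nonneg _) hb.le
    have hlo : (Real.sqrt (Real.sqrt W))⁻¹ ≤ (Real.sqrt b)⁻¹ := by
      apply inv_anti₀ hsb
      calc Real.sqrt b = Real.sqrt (Real.sqrt (b ^ 2)) := by rw [Real.sqrt_sq hb.le]
        _ ≤ Real.sqrt (Real.sqrt W) := by
            apply Real.sqrt_le_sqrt; apply Real.sqrt_le_sqrt; nlinarith [sq_nonneg (x - a)]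
    calc |Real.log W| ≤ 4 * (Real.sqrt (Real.sqrt W) + (Real.sqrt (Real.sqrt W))⁻¹) := h1
      _ ≤ 4 * ((Real.sqrt |x - a| + Real.sqrt b) + (Real.sqrt b)⁻¹) := by
          apply mul_le_mul_of_nonneg_left (add_le_add hup hlo) (by norm_num)
      _ ≤ 4 * Real.sqrt |x - a| + 4 * (Real.sqrt b + b⁻¹ * Real.sqrt b + (Real.sqrt b)⁻¹) := by
          nlinarith [Real.sqrt_nonneg b, Real.sqrt_pos.mpr hb, inv_pos.mpr hb,
            Real.sqrt_nonneg (b:ℝ)]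
  calc (1 + (x - l) ^ 2)⁻¹ * |Real.log W|
      ≤ (1 + (x - l) ^ 2)⁻¹ * (4 * Real.sqrt |x - a| +
          4 * (Real.sqrt b + b⁻¹ * Real.sqrt b + (Real.sqrt b)⁻¹)) :=
        mul_le_mul_of_nonneg_left hkey (by positivity)
    _ = (Real.sqrt |x - a| * (1 + (x - l) ^ 2)⁻¹) * 4 +
        (1 + (x - l) ^ 2)⁻¹ * (4 * (Real.sqrt b + b⁻¹ * Real.sqrt b + (Real.sqrt b)⁻¹)) := by
        ring

lemma prodker_integrable (a b l : ℝ) (hb : 0 < b) :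
    Integrable fun x : ℝ => (1 + (x - l) ^ 2)⁻¹ * ((x - a) ^ 2 + b ^ 2)⁻¹ := by
  apply ((cauchy_integrable l).mul_const (b ^ 2)⁻¹).mono' ?_ ?_
  · have c1 : Continuous fun x : ℝ => (1 + (x - l) ^ 2)⁻¹ :=
      Continuous.inv₀ (by continuity) fun x => by positivity
    have c2 : Continuous fun x : ℝ => ((x - a) ^ 2 + b ^ 2)⁻¹ :=
      Continuous.inv₀ (by continuity) fun x => by positivity
    exact (c1.mul c2).aestronglyMeasurable
  · filter_upwards with x
    rw [Real.norm_eq_abs, abs_of_nonneg (by positivity)]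
    apply mul_le_mul_of_nonneg_left _ (by positivity)
    exact inv_anti₀ (by positivity) (by nlinarith [sq_nonneg (x - a)])

lemma antider_integral (b c A B E G : ℝ) (hb : 0 < b)
    (hident : ∀ x : ℝ,
      A * (x / (1 + x ^ 2) - (x - c) / ((x - c) ^ 2 + b ^ 2)) + B * (1 + x ^ 2)⁻¹
        + E * (b / ((x - c) ^ 2 + b ^ 2))
        + G * ((b ^ 2 - (x - c) ^ 2) / (((x - c) ^ 2 + b ^ 2) ^ 2))
      = (1 + x ^ 2)⁻¹ * ((x - c) ^ 2 + b ^ 2)⁻¹) :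
    ∫ x : ℝ, (1 + x ^ 2)⁻¹ * ((x - c) ^ 2 + b ^ 2)⁻¹ = π * (B + E) := by
  have hW : ∀ x : ℝ, 0 < (x - c) ^ 2 + b ^ 2 := fun x => by positivity
  have hP : ∀ x : ℝ, 0 < 1 + x ^ 2 := fun x => by positivity
  set H : ℝ → ℝ := fun x =>
    A / 2 * (Real.log (1 + x ^ 2) - Real.log ((x - c) ^ 2 + b ^ 2))
      + B * Real.arctan x + E * Real.arctan ((x - c) / b)
      + G * ((x - c) / ((x - c) ^ 2 + b ^ 2)) with hHdef
  -- derivative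
  have hder : ∀ x : ℝ, HasDerivAt H ((1 + x ^ 2)⁻¹ * ((x - c) ^ 2 + b ^ 2)⁻¹) x := by
    intro x
    have hp1 : HasDerivAt (fun x : ℝ => 1 + x ^ 2) (2 * x) x := by
      simpa using (hasDerivAt_pow 2 x).const_add 1
    have hp2 : HasDerivAt (fun x : ℝ => (x - c) ^ 2 + b ^ 2) (2 * (x - c)) x := by
      have h := (((hasDerivAt_id x).sub_const c).pow 2).add_const (b ^ 2)
      simpa using h
    have h1 : HasDerivAt (fun x : ℝ => Real.log (1 + x ^ 2)) (2 * x / (1 + x ^ 2)) x :=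
      hp1.log (hP x).ne'
    have h2 : HasDerivAt (fun x : ℝ => Real.log ((x - c) ^ 2 + b ^ 2))
        (2 * (x - c) / ((x - c) ^ 2 + b ^ 2)) x := hp2.log (hW x).ne'
    have h3 : HasDerivAt Real.arctan (1 + x ^ 2)⁻¹ x := Real.hasDerivAt_arctan' x
    have h4 : HasDerivAt (fun x : ℝ => Real.arctan ((x - c) / b))
        (b / ((x - c) ^ 2 + b ^ 2)) x := by
      have hin : HasDerivAt (fun x : ℝ => (x - c) / b) (1 / b) x := by
        simpa [div_eq_mul_inv] using ((hasDerivAt_id x).sub_const c).div_const b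
      have hcomp := (Real.hasDerivAt_arctan ((x - c) / b)).comp x hin
      exact hcomp.congr_deriv (by field_simp <;> ring)
    have h5 : HasDerivAt (fun x : ℝ => (x - c) / ((x - c) ^ 2 + b ^ 2))
        ((b ^ 2 - (x - c) ^ 2) / (((x - c) ^ 2 + b ^ 2) ^ 2)) x := by
      have hnum : HasDerivAt (fun x : ℝ => x - c) 1 x := (hasDerivAt_id x).sub_const c
      have hdiv := hnum.div hp2 (hW x).ne'
      exact hdiv.congr_deriv (by ring)
    have hsum := ((((h1.sub h2).const_mul (A / 2)).add (h3.const_mul B)).add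
      (h4.const_mul E)).add (h5.const_mul G)
    exact hsum.congr_deriv (by rw [← hident x]; ring)
  -- limits
  have hrat := aux_tendsto
    (fun t => (t ^ 2 + 1) / ((1 - c * t) ^ 2 + (b * t) ^ 2))
    (by
      apply ContinuousAt.div (by fun_prop) (by fun_prop)
      norm_num)
    (fun x => (1 + x ^ 2) / ((x - c) ^ 2 + b ^ 2))
    (by
      intro x hx
      rw [div_eq_div_iff (hW x).ne' (by positivity)]
      field_simp
      try ring
      try tauto)
  norm_num at hrat
  have hlograt_top : Tendsto
      (fun x : ℝ => Real.log (1 + x ^ 2) - Real.log ((x - c) ^ 2 + b ^ 2)) atTop (𝓝 0) := by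
    have hlog := (Real.continuousAt_log one_ne_zero).tendsto
    rw [Real.log_one] at hlog
    apply Tendsto.congr ?_ (hlog.comp hrat.1)
    intro x
    simp only [Function.comp_apply]
    rw [Real.log_div (hP x).ne' (hW x).ne']
  have hlograt_bot : Tendsto
      (fun x : ℝ => Real.log (1 + x ^ 2) - Real.log ((x - c) ^ 2 + b ^ 2)) atBot (𝓝 0) := by
    have hlog := (Real.continuousAt_log one_ne_zero).tendsto
    rw [Real.log_one] at hlog
    apply Tendsto.congr ?_ (hlog.comp hrat.2)
    intro x
    simp only [Function.comp_apply]
    rw [Real.log_div (hP x).ne' (hW x).ne']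
  have hfrac := aux_tendsto
    (fun t => (t * (1 - c * t)) / ((1 - c * t) ^ 2 + (b * t) ^ 2))
    (by
      apply ContinuousAt.div (by fun_prop) (by fun_prop)
      norm_num)
    (fun x => (x - c) / ((x - c) ^ 2 + b ^ 2))
    (by
      intro x hx
      rw [div_eq_div_iff (hW x).ne' (by positivity)]
      field_simp
      try ring
      try tauto)
  norm_num at hfrac
  have harctan_top : Tendsto (fun x : ℝ => Real.arctan ((x - c) / b)) atTop (𝓝 (π / 2)) := by
    have hin : Tendsto (fun x : ℝ => (x - c) / b) atTop atTop :=
      (tendsto_atTop_add_const_right _ (-c) tendsto_id).atTop_div_const hb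
    exact (tendsto_nhds_of_tendsto_nhdsWithin Real.tendsto_arctan_atTop).comp hin
  have harctan_bot : Tendsto (fun x : ℝ => Real.arctan ((x - c) / b)) atBot (𝓝 (-(π / 2))) := by
    have hin : Tendsto (fun x : ℝ => (x - c) / b) atBot atBot :=
      (tendsto_atBot_add_const_right _ (-c) tendsto_id).atBot_div_const hb
    exact (tendsto_nhds_of_tendsto_nhdsWithin Real.tendsto_arctan_atBot).comp hin
  have harctanx_top : Tendsto (fun x : ℝ => Real.arctan x) atTop (𝓝 (π / 2)) :=
    tendsto_nhds_of_tendsto_nhdsWithin Real.tendsto_arctan_atTop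
  have harctanx_bot : Tendsto (fun x : ℝ => Real.arctan x) atBot (𝓝 (-(π / 2))) :=
    tendsto_nhds_of_tendsto_nhdsWithin Real.tendsto_arctan_atBot
  have hHtop : Tendsto H atTop (𝓝 (B * (π / 2) + E * (π / 2))) := by
    have := (((hlograt_top.const_mul (A / 2)).add (harctanx_top.const_mul B)).add
      (harctan_top.const_mul E)).add (hfrac.1.const_mul G)
    simpa using this
  have hHbot : Tendsto H atBot (𝓝 (B * (-(π / 2)) + E * (-(π / 2)))) := by
    have := (((hlograt_bot.const_mul (A / 2)).add (harctanx_bot.const_mul B)).add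
      (harctan_bot.const_mul E)).add (hfrac.2.const_mul G)
    simpa using this
  -- assemble
  have hint : Integrable fun x : ℝ => (1 + x ^ 2)⁻¹ * ((x - c) ^ 2 + b ^ 2)⁻¹ := by
    have := prodker_integrable c b 0 hb
    simpa using this
  have hIoi : ∫ x in Ioi (0:ℝ), (1 + x ^ 2)⁻¹ * ((x - c) ^ 2 + b ^ 2)⁻¹
      = (B * (π / 2) + E * (π / 2)) - H 0 :=
    integral_Ioi_of_hasDerivAt_of_tendsto' (fun x _ => hder x) hint.integrableOn hHtop
  have hIic : ∫ x in Iic (0:ℝ), (1 + x ^ 2)⁻¹ * ((x - c) ^ 2 + b ^ 2)⁻¹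
      = H 0 - (B * (-(π / 2)) + E * (-(π / 2))) :=
    integral_Iic_of_hasDerivAt_of_tendsto' (fun x _ => hder x) hint.integrableOn hHbot
  rw [← intervalIntegral.integral_Iic_add_Ioi (b := (0:ℝ)) hint.integrableOn hint.integrableOn, hIoi, hIic]
  ring

lemma prod_integral (b c : ℝ) (hb : 0 < b) :
    ∫ x : ℝ, (1 + x ^ 2)⁻¹ * ((x - c) ^ 2 + b ^ 2)⁻¹
      = π * (1 + b) / (b * (c ^ 2 + (1 + b) ^ 2)) := by
  by_cases hdeg : c = 0 ∧ b = 1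
  · obtain ⟨hc, hb1⟩ := hdeg
    subst hc hb1
    rw [antider_integral 1 0 0 (1/2) 0 (1/2) one_pos ?_]
    · ring_nf
    · intro x
      have h : (0:ℝ) < (x - 0) ^ 2 + 1 ^ 2 := by positivity
      field_simp
      ring
  · set K : ℝ := (c ^ 2 + b ^ 2 - 1) ^ 2 + 4 * c ^ 2 with hK
    have hKpos : 0 < K := by
      rcases (not_and_or.mp hdeg) with hc | hb1
      · have : c ^ 2 > 0 := by positivity
        nlinarith [sq_nonneg (c ^ 2 + b ^ 2 - 1)]
      · have h1 : (0:ℝ) < (b - 1) ^ 2 := by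
          have : b - 1 ≠ 0 := fun h => hb1 (by linarith [sub_eq_zero.mp h])
          positivity
        nlinarith [sq_nonneg c, sq_nonneg (c*b), sq_nonneg (c*c), sq_nonneg (b+1), hb,
          mul_pos h1 (by positivity : (0:ℝ) < (b+1)^2)]
    have hKne := hKpos.ne'
    set A : ℝ := 2 * c / K
    set B : ℝ := (c ^ 2 + b ^ 2 - 1) / K
    set E : ℝ := (c * A - B) / b
    rw [antider_integral b c A B E 0 hb ?_]
    · simp only [A, B, E]
      field_simp
      rw [hK]
      ring
    · intro x
      have hW : (0:ℝ) < (x - c) ^ 2 + b ^ 2 := by positivity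
      have hP : (0:ℝ) < 1 + x ^ 2 := by positivity
      simp only [A, B, E]
      field_simp
      rw [hK]
      ring

lemma F_hasDeriv (a l b : ℝ) (hb : 0 < b) :
    HasDerivAt (fun t : ℝ => ∫ x : ℝ, (1 + (x - l) ^ 2)⁻¹ * Real.log ((x - a) ^ 2 + t ^ 2))
      (2 * π * (1 + b) / ((a - l) ^ 2 + (1 + b) ^ 2)) b := by
  have hP : ∀ x : ℝ, 0 < 1 + (x - l) ^ 2 := fun x => by positivity
  have key := hasDerivAt_integral_of_dominated_loc_of_deriv_le (μ := volume)
    (F := fun t (x : ℝ) => (1 + (x - l) ^ 2)⁻¹ * Real.log ((x - a) ^ 2 + t ^ 2))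
    (F' := fun t (x : ℝ) => (1 + (x - l) ^ 2)⁻¹ * (2 * t / ((x - a) ^ 2 + t ^ 2)))
    (bound := fun x : ℝ => (1 + (x - l) ^ 2)⁻¹ * (4 / b))
    (x₀ := b) (s := Metric.ball b (b / 2)) (Metric.ball_mem_nhds b (by positivity))
    ?_ ?_ ?_ ?_ ?_ ?_
  · -- conclude
    have hval : (∫ x : ℝ, (1 + (x - l) ^ 2)⁻¹ * (2 * b / ((x - a) ^ 2 + b ^ 2)))
        = 2 * π * (1 + b) / ((a - l) ^ 2 + (1 + b) ^ 2) := by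
      have h1 : (fun x : ℝ => (1 + (x - l) ^ 2)⁻¹ * (2 * b / ((x - a) ^ 2 + b ^ 2)))
          = fun x : ℝ => (2 * b) * ((fun u : ℝ => (1 + u ^ 2)⁻¹ * ((u - (a - l)) ^ 2 + b ^ 2)⁻¹) (x - l)) := by
        funext x
        have : x - l - (a - l) = x - a := by ring
        simp only [this]
        ring
      rw [h1, integral_const_mul,
        integral_sub_right_eq_self (fun u : ℝ => (1 + u ^ 2)⁻¹ * ((u - (a - l)) ^ 2 + b ^ 2)⁻¹) l,
        prod_integral b (a - l) hb]
      have h2 : (0:ℝ) < (a - l) ^ 2 + (1 + b) ^ 2 := by positivity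
      field_simp
    rw [← hval]
    exact key.2
  · -- hF_meas
    filter_upwards with t
    apply AEStronglyMeasurable.mul
    · exact (Continuous.inv₀ (by continuity) fun x => (hP x).ne').aestronglyMeasurable
    · exact (Real.measurable_log.comp (by measurability)).aestronglyMeasurable
  · -- hF_int
    exact log_integrable a b l hb
  · -- hF'_meas
    apply AEStronglyMeasurable.mul
    · exact (Continuous.inv₀ (by continuity) fun x => (hP x).ne').aestronglyMeasurable
    · apply Continuous.aestronglyMeasurable
      exact continuous_const.div (by continuity) fun x => by positivity
  · -- h_bound
    filter_upwards with x t ht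
    have hball : |t - b| < b / 2 := by
      rw [Metric.mem_ball, Real.dist_eq] at ht
      exact ht
    have htpos : b / 2 < t := by
      cases abs_lt.mp hball with
      | intro h1 h2 => linarith
    have ht0 : 0 < t := by linarith
    have hWt : (0:ℝ) < (x - a) ^ 2 + t ^ 2 := by positivity
    rw [Real.norm_eq_abs, abs_mul, abs_of_nonneg (by positivity : (0:ℝ) ≤ (1 + (x - l) ^ 2)⁻¹),
      abs_of_nonneg (by positivity : (0:ℝ) ≤ 2 * t / ((x - a) ^ 2 + t ^ 2))]
    apply mul_le_mul_of_nonneg_left _ (by positivity)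
    calc 2 * t / ((x - a) ^ 2 + t ^ 2) ≤ 2 * t / t ^ 2 := by
          apply div_le_div_of_nonneg_left (by positivity) (by positivity)
          nlinarith [sq_nonneg (x - a)]
      _ = 2 / t := by field_simp
      _ ≤ 4 / b := by
          rw [div_le_div_iff₀ ht0 hb]
          nlinarith
  · -- bound integrable
    exact (cauchy_integrable l).mul_const _
  · -- h_diff
    filter_upwards with x t ht
    have hball : |t - b| < b / 2 := by
      rw [Metric.mem_ball, Real.dist_eq] at ht
      exact ht
    have ht0 : 0 < t := by
      cases abs_lt.mp hball with
      | intro h1 h2 => linarith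
    have hWt : (0:ℝ) < (x - a) ^ 2 + t ^ 2 := by positivity
    have hin : HasDerivAt (fun t : ℝ => (x - a) ^ 2 + t ^ 2) (2 * t) t := by
      simpa using (hasDerivAt_pow 2 t).const_add ((x - a) ^ 2)
    exact (hin.log hWt.ne').const_mul _

lemma aux_tendsto_top (φ : ℝ → ℝ) (hφ : ContinuousAt φ 0) (f : ℝ → ℝ)
    (heq : ∀ x : ℝ, 0 < x → f x = φ x⁻¹) :
    Tendsto f atTop (𝓝 (φ 0)) := by
  apply Tendsto.congr' ?_ (hφ.tendsto.comp tendsto_inv_atTop_zero)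
  filter_upwards [eventually_gt_atTop (0:ℝ)] with x hx using (heq x hx).symm

lemma G_tendsto (a l : ℝ) :
    Tendsto (fun t : ℝ => (∫ x : ℝ, (1 + (x - l) ^ 2)⁻¹ * Real.log ((x - a) ^ 2 + t ^ 2))
      - π * Real.log ((a - l) ^ 2 + (1 + t) ^ 2)) atTop (𝓝 0) := by
  set c : ℝ := a - l with hc
  have hP : ∀ x : ℝ, 0 < 1 + (x - l) ^ 2 := fun x => by positivity
  -- the combined integrand
  set Φ : ℝ → ℝ → ℝ := fun t x => (1 + (x - l) ^ 2)⁻¹ *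
      (Real.log ((x - a) ^ 2 + t ^ 2) - Real.log (c ^ 2 + (1 + t) ^ 2)) with hΦ
  have hKt : ∀ t : ℝ, 0 < t → (0:ℝ) < c ^ 2 + (1 + t) ^ 2 := fun t ht => by positivity
  -- dominated convergence
  have hdct : Tendsto (fun t : ℝ => ∫ x : ℝ, Φ t x) atTop (𝓝 0) := by
    have h0 : (0:ℝ) = ∫ x : ℝ, (0:ℝ) := by simp
    rw [h0]
    apply tendsto_integral_filter_of_dominated_convergence
      (bound := fun x : ℝ => (1 + (x - l) ^ 2)⁻¹ * Real.log (1 + (x - a) ^ 2)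
        + (1 + (x - l) ^ 2)⁻¹ * Real.log (4 * (c ^ 2 + 1)))
    · -- measurability
      filter_upwards with t
      apply AEStronglyMeasurable.mul
      · exact (Continuous.inv₀ (continuous_const.add ((continuous_id.sub continuous_const).pow 2))
          fun x => (hP x).ne').aestronglyMeasurable
      · exact ((Real.measurable_log.comp
          (((measurable_id.sub_const a).pow_const 2).add_const (t ^ 2))).sub_const
            _).aestronglyMeasurable
    · -- bound
      filter_upwards [eventually_ge_atTop (1:ℝ)] with t ht
      filter_upwards with x
      have ht0 : (0:ℝ) < t := by linarith
      have hWt : (0:ℝ) < (x - a) ^ 2 + t ^ 2 := by positivity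
      have hKt' := hKt t ht0
      rw [Real.norm_eq_abs, hΦ]
      simp only []
      rw [abs_mul, abs_of_nonneg (by positivity : (0:ℝ) ≤ (1 + (x - l) ^ 2)⁻¹)]
      rw [show (1 + (x - l) ^ 2)⁻¹ * Real.log (1 + (x - a) ^ 2)
        + (1 + (x - l) ^ 2)⁻¹ * Real.log (4 * (c ^ 2 + 1))
        = (1 + (x - l) ^ 2)⁻¹ * (Real.log (1 + (x - a) ^ 2)
          + Real.log (4 * (c ^ 2 + 1))) from by ring]
      apply mul_le_mul_of_nonneg_left _ (by positivity)
      rw [abs_le]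
      constructor
      · -- lower bound : -(log up) ≤ log W - log K
        have h1 : Real.log (c ^ 2 + (1 + t) ^ 2) ≤ Real.log ((x - a) ^ 2 + t ^ 2)
            + Real.log (4 * (c ^ 2 + 1)) := by
          rw [← Real.log_mul hWt.ne' (by positivity)]
          apply Real.log_le_log hKt'
          nlinarith [sq_nonneg (x - a), sq_nonneg c, sq_nonneg (t - 1), sq_nonneg (c*t), sq_nonneg (c*(t-1))]
        have h2 : (0:ℝ) ≤ Real.log (1 + (x - a) ^ 2) :=
          Real.log_nonneg (by nlinarith [sq_nonneg (x - a)])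
        linarith
      · -- upper bound : log W - log K ≤ log(1+(x-a)^2)
        have h1 : Real.log ((x - a) ^ 2 + t ^ 2) ≤ Real.log (c ^ 2 + (1 + t) ^ 2)
            + Real.log (1 + (x - a) ^ 2) := by
          rw [← Real.log_mul hKt'.ne' (by positivity : ((1:ℝ) + (x - a) ^ 2) ≠ 0)]
          apply Real.log_le_log hWt
          nlinarith [sq_nonneg (x - a), sq_nonneg c, sq_nonneg ((x-a)*c), sq_nonneg ((x-a)*(1+t)), sq_nonneg (x - a)]
        have h2 : (0:ℝ) ≤ Real.log (4 * (c ^ 2 + 1)) :=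
          Real.log_nonneg (by nlinarith [sq_nonneg c])
        linarith
    · -- bound integrable
      apply Integrable.add
      · have := log_integrable a 1 l one_pos
        apply this.congr
        filter_upwards with x
        rw [show (x - a) ^ 2 + 1 ^ 2 = 1 + (x - a) ^ 2 by ring]
      · exact (cauchy_integrable l).mul_const _
    · -- pointwise limit
      filter_upwards with x
      have hrat := aux_tendsto_top
        (fun s => (((x - a) * s) ^ 2 + 1) / ((c * s) ^ 2 + (s + 1) ^ 2))
        (by
          apply ContinuousAt.div (by fun_prop) (by fun_prop)
          norm_num)
        (fun t => ((x - a) ^ 2 + t ^ 2) / (c ^ 2 + (1 + t) ^ 2))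
        (by
          intro t ht
          have hs : (0:ℝ) < t⁻¹ := by positivity
          rw [div_eq_div_iff (by positivity)
            (by nlinarith [sq_nonneg (c * t⁻¹)] : (0:ℝ) < (c * t⁻¹) ^ 2 + (t⁻¹ + 1) ^ 2).ne']
          field_simp
          try ring
          try tauto)
      norm_num at hrat
      have hlog := (Real.continuousAt_log one_ne_zero).tendsto
      rw [Real.log_one] at hlog
      have hcomp := hlog.comp hrat
      have : Tendsto (fun t : ℝ => Real.log ((x - a) ^ 2 + t ^ 2)
          - Real.log (c ^ 2 + (1 + t) ^ 2)) atTop (𝓝 0) := by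
        apply Tendsto.congr' _ hcomp
        filter_upwards [eventually_gt_atTop (0:ℝ)] with t ht
        simp only [Function.comp_apply]
        rw [Real.log_div (by positivity) (by positivity)]
      have := this.const_mul ((1 + (x - l) ^ 2)⁻¹)
      rw [mul_zero] at this
      exact this
  -- identify Φ-integral with G
  apply Tendsto.congr' _ hdct
  filter_upwards [eventually_gt_atTop (0:ℝ)] with t ht
  have hKt' := hKt t ht
  have hint1 := log_integrable a t l ht
  have hint2 : Integrable fun x : ℝ =>
      (1 + (x - l) ^ 2)⁻¹ * Real.log (c ^ 2 + (1 + t) ^ 2) :=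
    (cauchy_integrable l).mul_const _
  have : (fun x : ℝ => Φ t x) = fun x : ℝ =>
      (1 + (x - l) ^ 2)⁻¹ * Real.log ((x - a) ^ 2 + t ^ 2)
        - (1 + (x - l) ^ 2)⁻¹ * Real.log (c ^ 2 + (1 + t) ^ 2) := by
    funext x
    rw [hΦ]
    ring
  rw [this, integral_sub hint1 hint2, integral_mul_const, cauchy_integral l]

lemma master (a l b : ℝ) (hb : 0 < b) :
    ∫ x : ℝ, (1 + (x - l) ^ 2)⁻¹ * Real.log ((x - a) ^ 2 + b ^ 2)
      = π * Real.log ((a - l) ^ 2 + (1 + b) ^ 2) := by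
  set G : ℝ → ℝ := fun t => (∫ x : ℝ, (1 + (x - l) ^ 2)⁻¹ * Real.log ((x - a) ^ 2 + t ^ 2))
      - π * Real.log ((a - l) ^ 2 + (1 + t) ^ 2) with hG
  have hGd : ∀ t : ℝ, 0 < t → HasDerivAt G 0 t := by
    intro t ht
    have hK : (0:ℝ) < (a - l) ^ 2 + (1 + t) ^ 2 := by positivity
    have h2 : HasDerivAt (fun t : ℝ => π * Real.log ((a - l) ^ 2 + (1 + t) ^ 2))
        (π * (2 * (1 + t) / ((a - l) ^ 2 + (1 + t) ^ 2))) t := by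
      have hin : HasDerivAt (fun t : ℝ => (a - l) ^ 2 + (1 + t) ^ 2) (2 * (1 + t)) t := by
        have h := (((hasDerivAt_id t).const_add 1).pow 2).const_add ((a - l) ^ 2)
        simpa using h
      exact (hin.log hK.ne').const_mul π
    have h := (F_hasDeriv a l t ht).sub h2
    have hz : 2 * π * (1 + t) / ((a - l) ^ 2 + (1 + t) ^ 2)
        - π * (2 * (1 + t) / ((a - l) ^ 2 + (1 + t) ^ 2)) = 0 := by
      field_simp
      ring
    rwa [hz] at h
  have hconst : ∀ t : ℝ, b ≤ t → G t = G b := by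
    intro t hbt
    have := constant_of_has_deriv_right_zero (f := G) (a := b) (b := t)
      (fun y hy => (hGd y (lt_of_lt_of_le hb hy.1)).continuousAt.continuousWithinAt)
      (fun y hy => (hGd y (lt_of_lt_of_le hb hy.1)).hasDerivWithinAt)
    exact this t ⟨hbt, le_rfl⟩
  have hlim : Tendsto G atTop (𝓝 (G b)) := by
    have hcn : Tendsto (fun _ : ℝ => G b) atTop (𝓝 (G b)) := tendsto_const_nhds
    apply Tendsto.congr' _ hcn
    filter_upwards [eventually_ge_atTop b] with t ht using (hconst t ht).symm
  have h0 : G b = 0 := tendsto_nhds_unique hlim (G_tendsto a l)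
  have := sub_eq_zero.mp h0
  linarith [this]

/-- Closed form of the negentropy of the mixture of the standard Cauchy density
`p_{0,1}` and the Cauchy density `p_{1,1}`. -/
theorem negentropy_cauchy_0111 (θ : ℝ) (hθ : θ ∈ Set.Ioo (0 : ℝ) 1) :
    ∫ x : ℝ, ((1 - θ) * (1 / (π * (1 + x ^ 2))) + θ * (1 / (π * (1 + (x - 1) ^ 2)))) *
        Real.log ((1 - θ) * (1 / (π * (1 + x ^ 2))) +
          θ * (1 / (π * (1 + (x - 1) ^ 2)))) =
      θ * Real.log ((2 * Real.sqrt (1 + θ - θ ^ 2) + θ + 2) /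
          (2 * Real.sqrt (1 + θ - θ ^ 2) - θ + 3)) +
        Real.log ((2 * Real.sqrt (1 + θ - θ ^ 2) - θ + 3) / (20 * π)) := by
  obtain ⟨hθ0, hθ1⟩ := hθ
  have hval : (0:ℝ) < 1 + θ - θ ^ 2 := by nlinarith
  set β : ℝ := Real.sqrt (1 + θ - θ ^ 2) with hβ
  have hβpos : 0 < β := Real.sqrt_pos.mpr hval
  have hβsq : β ^ 2 = 1 + θ - θ ^ 2 := Real.sq_sqrt hval.le
  have hπ : (0:ℝ) < π := Real.pi_pos
  -- integrable pieces
  have i0N : Integrable fun x : ℝ => (1 + x ^ 2)⁻¹ * Real.log ((x - (1 - θ)) ^ 2 + β ^ 2) := by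
    simpa using log_integrable (1 - θ) β 0 hβpos
  have i01 : Integrable fun x : ℝ => (1 + x ^ 2)⁻¹ * Real.log (x ^ 2 + 1) := by
    simpa using log_integrable 0 1 0 one_pos
  have i02 : Integrable fun x : ℝ => (1 + x ^ 2)⁻¹ * Real.log ((x - 1) ^ 2 + 1) := by
    simpa using log_integrable 1 1 0 one_pos
  have i1N : Integrable fun x : ℝ =>
      (1 + (x - 1) ^ 2)⁻¹ * Real.log ((x - (1 - θ)) ^ 2 + β ^ 2) :=
    log_integrable (1 - θ) β 1 hβpos
  have i11 : Integrable fun x : ℝ => (1 + (x - 1) ^ 2)⁻¹ * Real.log (x ^ 2 + 1) := by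
    simpa using log_integrable 0 1 1 one_pos
  have i12 : Integrable fun x : ℝ => (1 + (x - 1) ^ 2)⁻¹ * Real.log ((x - 1) ^ 2 + 1) := by
    simpa using log_integrable 1 1 1 one_pos
  have c0 : Integrable fun x : ℝ => (1 + x ^ 2)⁻¹ := integrable_inv_one_add_sq
  have c1 : Integrable fun x : ℝ => (1 + (x - 1) ^ 2)⁻¹ := cauchy_integrable 1
  -- integral values
  have m0N : ∫ x : ℝ, (1 + x ^ 2)⁻¹ * Real.log ((x - (1 - θ)) ^ 2 + β ^ 2)
      = π * Real.log (2 * β - θ + 3) := by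
    have h := master (1 - θ) 0 β hβpos
    simp only [sub_zero] at h
    rw [h, show (1 - θ) ^ 2 + (1 + β) ^ 2 = 2 * β - θ + 3 from by linear_combination hβsq]
  have m1N : ∫ x : ℝ, (1 + (x - 1) ^ 2)⁻¹ * Real.log ((x - (1 - θ)) ^ 2 + β ^ 2)
      = π * Real.log (2 * β + θ + 2) := by
    have h := master (1 - θ) 1 β hβpos
    rw [h, show (1 - θ - 1) ^ 2 + (1 + β) ^ 2 = 2 * β + θ + 2 from by linear_combination hβsq]
  have m01 : ∫ x : ℝ, (1 + x ^ 2)⁻¹ * Real.log (x ^ 2 + 1) = π * Real.log 4 := by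
    have := master 0 0 1 one_pos
    norm_num at this
    convert this using 2
  have m02 : ∫ x : ℝ, (1 + x ^ 2)⁻¹ * Real.log ((x - 1) ^ 2 + 1) = π * Real.log 5 := by
    have := master 1 0 1 one_pos
    norm_num at this
    convert this using 2
  have m11 : ∫ x : ℝ, (1 + (x - 1) ^ 2)⁻¹ * Real.log (x ^ 2 + 1) = π * Real.log 5 := by
    have := master 0 1 1 one_pos
    norm_num at this
    convert this using 2
  have m12 : ∫ x : ℝ, (1 + (x - 1) ^ 2)⁻¹ * Real.log ((x - 1) ^ 2 + 1) = π * Real.log 4 := by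
    have := master 1 1 1 one_pos
    norm_num at this
    convert this using 2
  have mc0 : ∫ x : ℝ, (1 + x ^ 2)⁻¹ = π := integral_univ_inv_one_add_sq
  have mc1 : ∫ x : ℝ, (1 + (x - 1) ^ 2)⁻¹ = π := cauchy_integral 1
  -- the two grouped integrands
  set g0 : ℝ → ℝ := fun x => (1 + x ^ 2)⁻¹ * Real.log ((x - (1 - θ)) ^ 2 + β ^ 2)
      - (1 + x ^ 2)⁻¹ * Real.log π - (1 + x ^ 2)⁻¹ * Real.log (x ^ 2 + 1)
      - (1 + x ^ 2)⁻¹ * Real.log ((x - 1) ^ 2 + 1) with hg0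
  set g1 : ℝ → ℝ := fun x => (1 + (x - 1) ^ 2)⁻¹ * Real.log ((x - (1 - θ)) ^ 2 + β ^ 2)
      - (1 + (x - 1) ^ 2)⁻¹ * Real.log π - (1 + (x - 1) ^ 2)⁻¹ * Real.log (x ^ 2 + 1)
      - (1 + (x - 1) ^ 2)⁻¹ * Real.log ((x - 1) ^ 2 + 1) with hg1
  have hg0int : Integrable g0 := ((i0N.sub (c0.mul_const (Real.log π))).sub i01).sub i02
  have hg1int : Integrable g1 := ((i1N.sub (c1.mul_const (Real.log π))).sub i11).sub i12
  -- pointwise identity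
  have hpoint : ∀ x : ℝ,
      ((1 - θ) * (1 / (π * (1 + x ^ 2))) + θ * (1 / (π * (1 + (x - 1) ^ 2)))) *
        Real.log ((1 - θ) * (1 / (π * (1 + x ^ 2))) + θ * (1 / (π * (1 + (x - 1) ^ 2))))
      = (1 - θ) / π * g0 x + θ / π * g1 x := by
    intro x
    have hD1 : (0:ℝ) < 1 + x ^ 2 := by positivity
    have hD2 : (0:ℝ) < 1 + (x - 1) ^ 2 := by positivity
    have hN : (0:ℝ) < (x - (1 - θ)) ^ 2 + β ^ 2 := by positivity
    have hm : (1 - θ) * (1 / (π * (1 + x ^ 2))) + θ * (1 / (π * (1 + (x - 1) ^ 2)))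
        = ((x - (1 - θ)) ^ 2 + β ^ 2) / (π * ((x ^ 2 + 1) * ((x - 1) ^ 2 + 1))) := by
      rw [hβsq]
      field_simp
      ring
    have hD1' : (0:ℝ) < x ^ 2 + 1 := by positivity
    have hD2' : (0:ℝ) < (x - 1) ^ 2 + 1 := by positivity
    have hlog : Real.log ((1 - θ) * (1 / (π * (1 + x ^ 2))) + θ * (1 / (π * (1 + (x - 1) ^ 2))))
        = Real.log ((x - (1 - θ)) ^ 2 + β ^ 2) - Real.log π - Real.log (x ^ 2 + 1)
          - Real.log ((x - 1) ^ 2 + 1) := by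
      rw [hm, Real.log_div hN.ne' (by positivity), Real.log_mul hπ.ne'
        (by positivity), Real.log_mul hD1'.ne' hD2'.ne']
      ring
    rw [hlog, hg0, hg1]
    simp only []
    have e1 : (1 + x ^ 2) = (x ^ 2 + 1) := by ring
    field_simp
  rw [show (fun x : ℝ =>
      ((1 - θ) * (1 / (π * (1 + x ^ 2))) + θ * (1 / (π * (1 + (x - 1) ^ 2)))) *
        Real.log ((1 - θ) * (1 / (π * (1 + x ^ 2))) + θ * (1 / (π * (1 + (x - 1) ^ 2)))))
      = fun x : ℝ => (1 - θ) / π * g0 x + θ / π * g1 x from funext hpoint]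
  rw [integral_add (hg0int.const_mul _) (hg1int.const_mul _), integral_const_mul,
    integral_const_mul]
  have hI0 : ∫ x : ℝ, g0 x = π * Real.log (2 * β - θ + 3) - π * Real.log π
      - π * Real.log 4 - π * Real.log 5 := by
    have iA : Integrable (fun x : ℝ => (1 + x ^ 2)⁻¹ * Real.log ((x - (1 - θ)) ^ 2 + β ^ 2)
        - (1 + x ^ 2)⁻¹ * Real.log π) := i0N.sub (c0.mul_const (Real.log π))
    have iB : Integrable (fun x : ℝ => (1 + x ^ 2)⁻¹ * Real.log ((x - (1 - θ)) ^ 2 + β ^ 2)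
        - (1 + x ^ 2)⁻¹ * Real.log π - (1 + x ^ 2)⁻¹ * Real.log (x ^ 2 + 1)) := iA.sub i01
    rw [hg0]
    beta_reduce
    rw [integral_sub iB i02, integral_sub iA i01,
      integral_sub i0N (c0.mul_const (Real.log π)), integral_mul_const, mc0,
      m0N, m01, m02]
  have hI1 : ∫ x : ℝ, g1 x = π * Real.log (2 * β + θ + 2) - π * Real.log π
      - π * Real.log 5 - π * Real.log 4 := by
    have iA : Integrable (fun x : ℝ => (1 + (x - 1) ^ 2)⁻¹ * Real.log ((x - (1 - θ)) ^ 2 + β ^ 2)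
        - (1 + (x - 1) ^ 2)⁻¹ * Real.log π) := i1N.sub (c1.mul_const (Real.log π))
    have iB : Integrable (fun x : ℝ => (1 + (x - 1) ^ 2)⁻¹ * Real.log ((x - (1 - θ)) ^ 2 + β ^ 2)
        - (1 + (x - 1) ^ 2)⁻¹ * Real.log π
        - (1 + (x - 1) ^ 2)⁻¹ * Real.log (x ^ 2 + 1)) := iA.sub i11
    rw [hg1]
    beta_reduce
    rw [integral_sub iB i12, integral_sub iA i11,
      integral_sub i1N (c1.mul_const (Real.log π)), integral_mul_const, mc1,
      m1N, m11, m12]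
  rw [hI0, hI1]
  -- final log algebra
  have hA : (0:ℝ) < 2 * β + θ + 2 := by positivity
  have hB : (0:ℝ) < 2 * β - θ + 3 := by nlinarith
  have h20π : ((20:ℝ) * π) ≠ 0 := by positivity
  rw [Real.log_div hA.ne' hB.ne', Real.log_div hB.ne' h20π,
    Real.log_mul (by norm_num : (20:ℝ) ≠ 0) hπ.ne',
    show (20:ℝ) = 4 * 5 from by norm_num,
    Real.log_mul (by norm_num : (4:ℝ) ≠ 0) (by norm_num : (5:ℝ) ≠ 0)]
  field_simp
  ring
end

section
/- Let p_{0,1}(x) = 1/(π(1+x²)) and p_{1,1}(x) = 1/(π(1+(x−1)²)), and for θ ∈ (0,1) let m_θ = (1−θ)·p_{0,1} + θ·p_{1,1}. Then for all θ1, θ2 ∈ (0,1), the Kullback–Leibler divergence admits the closed form: ∫_ℝ m_{θ1}(x)·log(m_{θ1}(x)/m_{θ2}(x)) dx = θ1·log( ((2·√(1+θ1−θ1²)+θ1+2)·(2·√(1+θ2−θ2²)−θ2+3)) / ((2·√(1+θ1−θ1²)−θ1+3)·(2·√(1+θ2−θ2²)+θ2+2)) ) + log( (2·√(1+θ1−θ1²)−θ1+3)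 / (2·√(1+θ2−θ2²)−θ2+3) ). -/
open MeasureTheory Real Set

lemma sqrt_add_le'_s14 (u v : ℝ) (hu : 0 ≤ u) (hv : 0 ≤ v) :
    Real.sqrt (u + v) ≤ Real.sqrt u + Real.sqrt v := by
  have h : Real.sqrt (u + v) ≤ Real.sqrt ((Real.sqrt u + Real.sqrt v) ^ 2) :=
    Real.sqrt_le_sqrt (by nlinarith [Real.sq_sqrt hu, Real.sq_sqrt hv, Real.sqrt_nonneg u, Real.sqrt_nonneg v])
  rwa [Real.sqrt_sq (by positivity)] at h

lemma cont_sqrt_abs_div : Continuous (fun x : ℝ => Real.sqrt |x| / (1 + x ^ 2)) :=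
  Continuous.div (by continuity) (by continuity) (fun x => by positivity)

lemma integrable_sqrt_abs_div : Integrable (fun x : ℝ => Real.sqrt |x| / (1 + x ^ 2)) := by
  set f := fun x : ℝ => Real.sqrt |x| / (1 + x ^ 2) with hf
  have h1 : IntegrableOn f (Ioi 1) := by
    refine Integrable.mono' (g := fun x : ℝ => x ^ (-(3:ℝ)/2))
      (integrableOn_Ioi_rpow_of_lt (by norm_num) one_pos)
      cont_sqrt_abs_div.aestronglyMeasurable.restrict ?_
    rw [ae_restrict_iff' measurableSet_Ioi]
    refine ae_of_all _ fun x hx => ?_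
    have hx1 : (1:ℝ) < x := hx
    have hx0 : (0:ℝ) < x := by linarith
    have : f x ≤ Real.sqrt x / x ^ 2 := by
      rw [hf]; simp only [abs_of_pos hx0]
      exact div_le_div₀ (Real.sqrt_nonneg x) le_rfl (by positivity) (by nlinarith)
    rw [Real.norm_eq_abs, abs_of_nonneg (by positivity)]
    refine this.trans ?_
    rw [Real.sqrt_eq_rpow, show (x:ℝ) ^ (2:ℕ) = x ^ ((2:ℝ)) by
      rw [← Real.rpow_natCast x 2]; norm_num, ← Real.rpow_sub hx0]
    norm_num
  have h2 : IntegrableOn f (Icc (-1) 1) :=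
    cont_sqrt_abs_div.continuousOn.integrableOn_compact isCompact_Icc
  have h3 : IntegrableOn f (Iio (-1)) := by
    have hemb : MeasurableEmbedding (fun x : ℝ => -x) :=
      (Homeomorph.neg ℝ).measurableEmbedding
    have hmp : MeasurePreserving (fun x : ℝ => -x)
        (volume.restrict ((fun x : ℝ => -x) ⁻¹' (Ioi 1))) (volume.restrict (Ioi 1)) :=
      (Measure.measurePreserving_neg volume).restrict_preimage measurableSet_Ioi
    have h4 : Integrable (f ∘ fun x : ℝ => -x)
        (volume.restrict ((fun x : ℝ => -x) ⁻¹' (Ioi 1))) :=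
      (hmp.integrable_comp_emb hemb).2 h1
    have hset : (fun x : ℝ => -x) ⁻¹' (Ioi 1) = Iio (-1) := by
      ext x; simp [lt_neg]
    rw [hset] at h4
    refine h4.congr (ae_of_all _ fun x => ?_)
    simp [hf, Function.comp]
  have : IntegrableOn f (Iio (-1) ∪ (Icc (-1) 1 ∪ Ioi 1)) := h3.union (h2.union h1)
  rw [← integrableOn_univ]
  refine this.mono_set fun x _ => ?_
  rcases lt_trichotomy x (-1) with h | h | h
  · exact Or.inl h
  · exact Or.inr (Or.inl ⟨le_of_eq h.symm, by linarith⟩)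
  · rcases le_or_gt x 1 with h' | h'
    · exact Or.inr (Or.inl ⟨by linarith, h'⟩)
    · exact Or.inr (Or.inr h')

lemma abs_log_le_s14 {t : ℝ} (ht : 0 < t) :
    |Real.log t| ≤ 4 * Real.sqrt (Real.sqrt t) + 4 / Real.sqrt (Real.sqrt t) := by
  set u := Real.sqrt (Real.sqrt t) with hu
  have hu0 : 0 < u := by positivity
  have hlog : Real.log u = Real.log t / 4 := by
    rw [hu, Real.log_sqrt (Real.sqrt_nonneg t), Real.log_sqrt ht.le]; ring
  have h1 : Real.log u ≤ u := (Real.log_le_sub_one_of_pos hu0).trans (by linarith)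
  have h2 : -Real.log u ≤ u⁻¹ := by
    rw [← Real.log_inv]
    exact (Real.log_le_sub_one_of_pos (by positivity)).trans (by linarith)
  have h3 : (0:ℝ) < u⁻¹ := by positivity
  rw [abs_le]
  constructor
  · rw [div_eq_mul_inv]; nlinarith
  · rw [div_eq_mul_inv]; nlinarith

lemma cont_cauchy_log (a b : ℝ) (hb : 0 < b) :
    Continuous (fun x : ℝ => 1/(π*(1+x^2)) * Real.log ((x-a)^2+b^2)) := by
  refine Continuous.mul (Continuous.div continuous_const (by continuity) ?_) ?_
  · intro x
    have : (0:ℝ) < 1 + x ^ 2 := by positivity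
    positivity
  · exact Continuous.log (by continuity) (fun x => by positivity)

lemma integrable_cauchy_log (a b : ℝ) (hb : 0 < b) :
    Integrable (fun x : ℝ => 1/(π*(1+x^2)) * Real.log ((x-a)^2+b^2)) := by
  set C := 4 * Real.sqrt (|a|+b) + 4 / Real.sqrt b with hC
  have hg : Integrable (fun x : ℝ => (1/π) * (4 * (Real.sqrt |x|/(1+x^2)) + C * (1+x^2)⁻¹)) :=
    ((integrable_sqrt_abs_div.const_mul (4:ℝ)).add (integrable_inv_one_add_sq.const_mul C)).const_mul (1/π)
  refine Integrable.mono' hg (cont_cauchy_log a b hb).aestronglyMeasurable (ae_of_all _ fun x => ?_)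
  set t := (x-a)^2+b^2 with htdef
  have ht : 0 < t := by positivity
  have s0 : Real.sqrt t ≤ |x| + (|a| + b) := by
    have habs : |x - a| ≤ |x| + |a| := abs_sub x a
    have h5 : t ≤ (|x| + (|a| + b)) ^ 2 := by
      nlinarith [sq_abs (x - a), abs_nonneg x, abs_nonneg a, hb.le, abs_nonneg (x-a)]
    calc Real.sqrt t ≤ Real.sqrt ((|x| + (|a| + b))^2) := Real.sqrt_le_sqrt h5
      _ = |x| + (|a| + b) := Real.sqrt_sq (by positivity)
  have s1 : Real.sqrt (Real.sqrt t) ≤ Real.sqrt |x| + Real.sqrt (|a| + b) :=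
    (Real.sqrt_le_sqrt s0).trans (sqrt_add_le'_s14 _ _ (abs_nonneg x) (by positivity))
  have s2 : 4 / Real.sqrt (Real.sqrt t) ≤ 4 / Real.sqrt b := by
    refine div_le_div_of_nonneg_left (by norm_num) (by positivity) ?_
    have : b ≤ Real.sqrt t := by
      rw [show b = Real.sqrt (b^2) from (Real.sqrt_sq hb.le).symm]
      exact Real.sqrt_le_sqrt (by nlinarith [sq_nonneg (x - a)])
    exact Real.sqrt_le_sqrt this
  have hlt : |Real.log t| ≤ 4 * Real.sqrt |x| + C := by
    have := abs_log_le_s14 ht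
    rw [hC]; nlinarith [Real.sqrt_nonneg (Real.sqrt t)]
  have hpos : (0:ℝ) < 1 + x ^ 2 := by positivity
  rw [norm_mul, Real.norm_eq_abs, Real.norm_eq_abs,
    abs_of_pos (show (0:ℝ) < 1/(π*(1+x^2)) by positivity)]
  calc 1/(π*(1+x^2)) * |Real.log t| ≤ 1/(π*(1+x^2)) * (4 * Real.sqrt |x| + C) := by
        exact mul_le_mul_of_nonneg_left hlt (by positivity)
    _ = (1/π) * (4 * (Real.sqrt |x|/(1+x^2)) + C * (1+x^2)⁻¹) := by
        field_simp

lemma ratio_tendsto_atTop (a b : ℝ) (hb : 0 < b) :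
    Filter.Tendsto (fun x : ℝ => (1+x^2)/((x-a)^2+b^2)) Filter.atTop (nhds 1) := by
  have h : ∀ᶠ x : ℝ in Filter.atTop,
      (x⁻¹*x⁻¹ + 1)/((1 - a*x⁻¹)^2 + (b*x⁻¹)^2) = (1+x^2)/((x-a)^2+b^2) := by
    filter_upwards [Filter.eventually_gt_atTop 0] with x hx
    have hx0 : x ≠ 0 := hx.ne'
    have h2 : ((x-a)^2+b^2) ≠ 0 := by positivity
    field_simp
  have hnum : Filter.Tendsto (fun x : ℝ => x⁻¹*x⁻¹ + 1) Filter.atTop (nhds 1) := by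
    have := (tendsto_inv_atTop_zero.mul tendsto_inv_atTop_zero).add
      (tendsto_const_nhds (α := ℝ) (f := Filter.atTop) (x := (1:ℝ)))
    simpa using this
  have hden : Filter.Tendsto (fun x : ℝ => (1 - a*x⁻¹)^2 + (b*x⁻¹)^2) Filter.atTop (nhds 1) := by
    have := ((tendsto_const_nhds (α := ℝ) (f := Filter.atTop) (x := (1:ℝ))).sub
      ((tendsto_const_nhds (x := a)).mul tendsto_inv_atTop_zero)).pow 2 |>.add
      (((tendsto_const_nhds (x := b)).mul tendsto_inv_atTop_zero).pow 2)
    simpa using this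
  have := (hnum.div hden one_ne_zero).congr' h
  simpa using this

lemma integral_rat (a b : ℝ) (ha : a ≠ 0) (hb : 0 < b) :
    ∫ x : ℝ, 1/((1+x^2)*((x-a)^2+b^2)) = π*(1+b)/(b*(a^2+(1+b)^2)) := by
  set A := a^2+b^2-1 with hA
  set B := 1+a^2-b^2 with hB
  set Δ := (a^2+b^2-1)^2+4*a^2 with hD
  have hΔ : 0 < Δ := by positivity
  set H : ℝ → ℝ := fun x => (a/Δ) * (Real.log (1+x^2) - Real.log ((x-a)^2+b^2))
    + (A/Δ) * Real.arctan x + (B/(b*Δ)) * Real.arctan ((x-a)/b) with hH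
  have hderiv : ∀ x : ℝ, HasDerivAt H (1/((1+x^2)*((x-a)^2+b^2))) x := by
    intro x
    have h1x : (0:ℝ) < 1 + x^2 := by positivity
    have h2x : (0:ℝ) < (x-a)^2 + b^2 := by positivity
    have d1 : HasDerivAt (fun x : ℝ => 1+x^2) (2*x) x := by
      simpa using (hasDerivAt_pow 2 x).const_add 1
    have d2 : HasDerivAt (fun x : ℝ => (x-a)^2+b^2) (2*(x-a)) x := by
      have := (((hasDerivAt_id x).sub_const a).pow 2).add_const (b^2)
      simpa using this
    have d3 : HasDerivAt (fun x : ℝ => Real.log (1+x^2)) (2*x/(1+x^2)) x := d1.log h1x.ne'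
    have d4 : HasDerivAt (fun x : ℝ => Real.log ((x-a)^2+b^2)) (2*(x-a)/((x-a)^2+b^2)) x :=
      d2.log h2x.ne'
    have d6 : HasDerivAt (fun x : ℝ => Real.arctan ((x-a)/b))
        (1/(1+((x-a)/b)^2) * (1/b)) x := by
      have inner : HasDerivAt (fun x : ℝ => (x-a)/b) (1/b) x := by
        simpa using ((hasDerivAt_id x).sub_const a).div_const b
      exact (Real.hasDerivAt_arctan ((x-a)/b)).comp x inner
    have hcomb := (((d3.sub d4).const_mul (a/Δ)).add
      ((Real.hasDerivAt_arctan x).const_mul (A/Δ))).add (d6.const_mul (B/(b*Δ)))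
    refine hcomb.congr_deriv ?_
    have h3 : (0:ℝ) < 1+((x-a)/b)^2 := by positivity
    field_simp
    ring
  have hint : Integrable (fun x : ℝ => 1/((1+x^2)*((x-a)^2+b^2))) := by
    refine Integrable.mono' (g := fun x : ℝ => (1/b^2) * (1+x^2)⁻¹)
      (integrable_inv_one_add_sq.const_mul _)
      ((Continuous.div continuous_const (by continuity)
        (fun x => by positivity)).aestronglyMeasurable) (ae_of_all _ fun x => ?_)
    have h1 : 1/((1+x^2)*((x-a)^2+b^2)) ≤ 1/((1+x^2)*b^2) := by
      apply one_div_le_one_div_of_le (by positivity)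
      gcongr
      nlinarith [sq_nonneg (x-a)]
    rw [Real.norm_eq_abs, abs_of_pos (by positivity)]
    calc 1/((1+x^2)*((x-a)^2+b^2)) ≤ 1/((1+x^2)*b^2) := h1
      _ = (1/b^2) * (1+x^2)⁻¹ := by rw [one_div, one_div, mul_inv]; ring
  have t2 : Filter.Tendsto Real.arctan Filter.atTop (nhds (π/2)) :=
    tendsto_nhds_of_tendsto_nhdsWithin Real.tendsto_arctan_atTop
  have t2' : Filter.Tendsto Real.arctan Filter.atBot (nhds (-(π/2))) :=
    tendsto_nhds_of_tendsto_nhdsWithin Real.tendsto_arctan_atBot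
  have targ : Filter.Tendsto (fun x : ℝ => (x-a)/b) Filter.atTop Filter.atTop := by
    apply Filter.Tendsto.atTop_div_const hb
    simpa [sub_eq_add_neg] using Filter.tendsto_atTop_add_const_right Filter.atTop (-a) Filter.tendsto_id
  have targ' : Filter.Tendsto (fun x : ℝ => (x-a)/b) Filter.atBot Filter.atBot := by
    apply Filter.Tendsto.atBot_div_const hb
    simpa [sub_eq_add_neg] using Filter.tendsto_atBot_add_const_right Filter.atBot (-a) Filter.tendsto_id
  have t1 : Filter.Tendsto (fun x : ℝ => Real.log (1+x^2) - Real.log ((x-a)^2+b^2))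
      Filter.atTop (nhds 0) := by
    have hcomp := (Real.continuousAt_log one_ne_zero).tendsto.comp (ratio_tendsto_atTop a b hb)
    simp only [Real.log_one] at hcomp
    refine Filter.Tendsto.congr (fun x => ?_) hcomp
    simp only [Function.comp_apply]
    exact Real.log_div (by positivity) (by positivity)
  have t1' : Filter.Tendsto (fun x : ℝ => Real.log (1+x^2) - Real.log ((x-a)^2+b^2))
      Filter.atBot (nhds 0) := by
    have hneg := (ratio_tendsto_atTop (-a) b hb).comp Filter.tendsto_neg_atBot_atTop
    have heq : ∀ x : ℝ, (1+(-x)^2)/((-x-(-a))^2+b^2) = (1+x^2)/((x-a)^2+b^2) := by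
      intro x; ring_nf
    have hratio : Filter.Tendsto (fun x : ℝ => (1+x^2)/((x-a)^2+b^2)) Filter.atBot (nhds 1) := by
      refine Filter.Tendsto.congr (fun x => ?_) hneg
      simpa using heq x
    have hcomp := (Real.continuousAt_log one_ne_zero).tendsto.comp hratio
    simp only [Real.log_one] at hcomp
    refine Filter.Tendsto.congr (fun x => ?_) hcomp
    simp only [Function.comp_apply]
    exact Real.log_div (by positivity) (by positivity)
  have htop : Filter.Tendsto H Filter.atTop
      (nhds ((a/Δ) * 0 + (A/Δ) * (π/2) + (B/(b*Δ)) * (π/2))) :=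
    ((t1.const_mul (a/Δ)).add (t2.const_mul (A/Δ))).add
      ((t2.comp targ).const_mul (B/(b*Δ)))
  have hbot : Filter.Tendsto H Filter.atBot
      (nhds ((a/Δ) * 0 + (A/Δ) * (-(π/2)) + (B/(b*Δ)) * (-(π/2)))) :=
    ((t1'.const_mul (a/Δ)).add (t2'.const_mul (A/Δ))).add
      ((t2'.comp targ').const_mul (B/(b*Δ)))
  rw [integral_of_hasDerivAt_of_tendsto hderiv hint hbot htop]
  have hne1 : a^2+(1+b)^2 ≠ 0 := by positivity
  have hne2 : ((a^2+b^2-1)^2+4*a^2 : ℝ) ≠ 0 := by positivity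
  field_simp
  ring

lemma ratio2_tendsto (u v : ℝ) (hv : 0 ≤ v) :
    Filter.Tendsto (fun c : ℝ => (u+c^2)/(v+(1+c)^2)) Filter.atTop (nhds 1) := by
  have h : ∀ᶠ c : ℝ in Filter.atTop,
      (u*c⁻¹*c⁻¹ + 1)/(v*c⁻¹*c⁻¹ + (c⁻¹+1)^2) = (u+c^2)/(v+(1+c)^2) := by
    filter_upwards [Filter.eventually_gt_atTop 0] with c hc
    have hc0 : c ≠ 0 := hc.ne'
    have h2 : v+(1+c)^2 ≠ 0 := by positivity
    field_simp
  have hnum : Filter.Tendsto (fun c : ℝ => u*c⁻¹*c⁻¹ + 1) Filter.atTop (nhds 1) := by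
    have := (((tendsto_const_nhds (α := ℝ) (f := Filter.atTop) (x := u)).mul
      tendsto_inv_atTop_zero).mul tendsto_inv_atTop_zero).add
      (tendsto_const_nhds (x := (1:ℝ)))
    simpa using this
  have hden : Filter.Tendsto (fun c : ℝ => v*c⁻¹*c⁻¹ + (c⁻¹+1)^2) Filter.atTop (nhds 1) := by
    have := (((tendsto_const_nhds (α := ℝ) (f := Filter.atTop) (x := v)).mul
      tendsto_inv_atTop_zero).mul tendsto_inv_atTop_zero).add
      ((tendsto_inv_atTop_zero.add (tendsto_const_nhds (x := (1:ℝ)))).pow 2)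
    simpa using this
  have := (hnum.div hden one_ne_zero).congr' h
  simpa using this

lemma cont_p : Continuous (fun x : ℝ => 1/(π*(1+x^2))) :=
  Continuous.div continuous_const
    (continuous_const.mul (continuous_const.add (continuous_pow 2)))
    (fun x => by positivity)

lemma cont_q (a c : ℝ) (hc : c ≠ 0) : Continuous (fun x : ℝ => Real.log ((x-a)^2+c^2)) :=
  Continuous.log (((continuous_id.sub continuous_const).pow 2).add continuous_const)
    (fun x => by positivity)

set_option maxHeartbeats 1000000 in
lemma cauchy_log_int (a b : ℝ) (ha : a ≠ 0) (hb : 0 < b) :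
    ∫ x : ℝ, 1/(π*(1+x^2)) * Real.log ((x-a)^2+b^2) = Real.log (a^2+(1+b)^2) := by
  set F : ℝ → ℝ := fun c => ∫ x : ℝ, 1/(π*(1+x^2)) * Real.log ((x-a)^2+c^2) with hFdef
  set G : ℝ → ℝ := fun c => Real.log (a^2+(1+c)^2) with hGdef
  -- derivative of F
  have hFd : ∀ c ∈ Ioi (0:ℝ), HasDerivAt F (2*(1+c)/(a^2+(1+c)^2)) c := by
    intro c0 hc0
    have hc0' : (0:ℝ) < c0 := hc0
    have m1 : ∀ᶠ c in nhds c0, AEStronglyMeasurable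
        (fun x : ℝ => 1/(π*(1+x^2)) * Real.log ((x-a)^2+c^2)) volume := by
      filter_upwards [eventually_ne_nhds hc0'.ne'] with c hc
      exact (cont_p.mul (cont_q a c hc)).aestronglyMeasurable
    have m2 : AEStronglyMeasurable
        (fun x : ℝ => 1/(π*(1+x^2)) * (2*c0/((x-a)^2+c0^2))) volume := by
      refine (cont_p.mul (Continuous.div continuous_const
        (((continuous_id.sub continuous_const).pow 2).add continuous_const)
        (fun x => by show (x - a)^2 + c0^2 ≠ 0; positivity))).aestronglyMeasurable
    have m3 : ∀ᵐ x : ℝ ∂volume, ∀ c ∈ Metric.ball c0 (c0/2),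
        ‖1/(π*(1+x^2)) * (2*c/((x-a)^2+c^2))‖ ≤ 4/(c0*π) * (1+x^2)⁻¹ := by
      refine ae_of_all _ fun x c hc => ?_
      rw [Metric.mem_ball, Real.dist_eq, abs_lt] at hc
      have hcpos : c0/2 < c := by linarith [hc.1]
      have hc2 : 0 < c := by linarith
      have h1 : (0:ℝ) < 1 + x^2 := by positivity
      have h2 : (0:ℝ) < (x-a)^2 + c^2 := by positivity
      have step1 : 2*c/((x-a)^2+c^2) ≤ 2/c := by
        rw [div_le_div_iff₀ h2 hc2]
        nlinarith [sq_nonneg (x-a)]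
      have step2 : 2/c ≤ 4/c0 := by
        rw [div_le_div_iff₀ hc2 hc0']
        nlinarith
      rw [Real.norm_eq_abs, abs_of_nonneg (by positivity)]
      calc 1/(π*(1+x^2)) * (2*c/((x-a)^2+c^2)) ≤ 1/(π*(1+x^2)) * (4/c0) :=
            mul_le_mul_of_nonneg_left (step1.trans step2) (by positivity)
        _ = 4/(c0*π) * (1+x^2)⁻¹ := by field_simp
    have m4 : ∀ᵐ x : ℝ ∂volume, ∀ c ∈ Metric.ball c0 (c0/2),
        HasDerivAt (fun c : ℝ => 1/(π*(1+x^2)) * Real.log ((x-a)^2+c^2))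
          (1/(π*(1+x^2)) * (2*c/((x-a)^2+c^2))) c := by
      refine ae_of_all _ fun x c hc => ?_
      rw [Metric.mem_ball, Real.dist_eq, abs_lt] at hc
      have hc2 : 0 < c := by linarith [hc.1]
      have inner : HasDerivAt (fun c : ℝ => (x-a)^2+c^2) (2*c) c := by
        simpa using (hasDerivAt_pow 2 c).const_add ((x-a)^2)
      have := (inner.log (by positivity)).const_mul (1/(π*(1+x^2)))
      simpa [mul_comm] using this
    have key := hasDerivAt_integral_of_dominated_loc_of_deriv_le
      (Metric.ball_mem_nhds c0 (show (0:ℝ) < c0/2 by positivity)) m1 (integrable_cauchy_log a c0 hc0') m2 m3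
      ((integrable_inv_one_add_sq).const_mul _) m4
    obtain ⟨-, hd⟩ := key
    have heq : (fun x : ℝ => 1/(π*(1+x^2)) * (2*c0/((x-a)^2+c0^2)))
        = fun x : ℝ => (2*c0/π) * (1/((1+x^2)*((x-a)^2+c0^2))) := funext fun x => by
      have h1 : (1:ℝ)+x^2 ≠ 0 := by positivity
      have h2 : (x-a)^2+c0^2 ≠ 0 := by positivity
      field_simp
    rw [heq, MeasureTheory.integral_const_mul, integral_rat a c0 ha hc0'] at hd
    refine hd.congr_deriv ?_
    have h1 : a^2+(1+c0)^2 ≠ 0 := by positivity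
    field_simp
  -- derivative of G
  have hGd : ∀ c ∈ Ioi (0:ℝ), HasDerivAt G (2*(1+c)/(a^2+(1+c)^2)) c := by
    intro c hc
    have inner : HasDerivAt (fun c : ℝ => a^2+(1+c)^2) (2*(1+c)) c := by
      have h := (((hasDerivAt_id c).const_add 1).pow 2).const_add (a^2)
      simpa using h
    exact inner.log (by positivity)
  -- F - G constant on Ioi 0
  have hpsi : ∀ c ∈ Ioi (0:ℝ), HasDerivAt (fun c => F c - G c) 0 c := by
    intro c hc
    have := (hFd c hc).sub (hGd c hc); rw [sub_self] at this; exact this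
  have hconst : ∀ c ∈ Ioi (0:ℝ), F c - G c = F b - G b := by
    intro c hc
    refine (convex_Ioi (0:ℝ)).is_const_of_fderivWithin_eq_zero
      (fun z hz => ((hpsi z hz).differentiableAt).differentiableWithinAt) ?_ hc hb
    intro z hz
    rw [fderivWithin_of_isOpen isOpen_Ioi hz, ((hpsi z hz).hasFDerivAt).fderiv]
    ext y
    simp
  -- limit of F - G at infinity
  have hlim : Filter.Tendsto (fun c => F c - G c) Filter.atTop (nhds 0) := by
    have m1 : ∀ᶠ (c : ℝ) in Filter.atTop, AEStronglyMeasurable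
        (fun x : ℝ => 1/(π*(1+x^2)) * (Real.log ((x-a)^2+c^2) - Real.log (a^2+(1+c)^2)))
        volume := by
      filter_upwards [Filter.eventually_gt_atTop (0:ℝ)] with c hc
      exact (cont_p.mul ((cont_q a c hc.ne').sub continuous_const)).aestronglyMeasurable
    have m2 : ∀ᶠ (c : ℝ) in Filter.atTop, ∀ᵐ x : ℝ ∂volume,
        ‖1/(π*(1+x^2)) * (Real.log ((x-a)^2+c^2) - Real.log (a^2+(1+c)^2))‖
          ≤ 1/(π*(1+x^2)) * (Real.log ((x-a)^2+1) + Real.log (a^2+4)) := by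
      filter_upwards [Filter.eventually_ge_atTop (1:ℝ)] with c hc
      refine ae_of_all _ fun x => ?_
      have hc0 : (0:ℝ) < c := by linarith
      have h1 : (0:ℝ) < (x-a)^2+c^2 := by positivity
      have h2 : (0:ℝ) < a^2+(1+c)^2 := by positivity
      rw [← Real.log_div h1.ne' h2.ne', norm_mul, Real.norm_eq_abs, Real.norm_eq_abs,
        abs_of_pos (show (0:ℝ) < 1/(π*(1+x^2)) by positivity)]
      refine mul_le_mul_of_nonneg_left ?_ (by positivity)
      rw [abs_le]
      constructor
      · have hlow : 1/(a^2+4) ≤ ((x-a)^2+c^2)/(a^2+(1+c)^2) := by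
          rw [div_le_div_iff₀ (by positivity) h2]
          nlinarith [mul_nonneg (sq_nonneg a) (show (0:ℝ) ≤ c^2-1 by nlinarith),
            mul_nonneg (show (0:ℝ) ≤ a^2+4 by positivity) (sq_nonneg (x-a)), sq_nonneg (c-1),
            show (0:ℝ) ≤ c^2-1 by nlinarith]
        have hl := Real.log_le_log (by positivity) hlow
        rw [Real.log_div one_ne_zero (by positivity), Real.log_one] at hl
        have hnn : 0 ≤ Real.log ((x-a)^2+1) := Real.log_nonneg (by nlinarith [sq_nonneg (x-a)])
        linarith
      · have hup : ((x-a)^2+c^2)/(a^2+(1+c)^2) ≤ (x-a)^2+1 := by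
          rw [div_le_iff₀ h2]
          nlinarith [sq_nonneg (x-a), sq_nonneg a, sq_nonneg (x-a+1)]
        have hl := Real.log_le_log (by positivity) hup
        have hnn : 0 ≤ Real.log (a^2+4) := Real.log_nonneg (by nlinarith [sq_nonneg a])
        linarith
    have m3 : Integrable (fun x : ℝ =>
        1/(π*(1+x^2)) * (Real.log ((x-a)^2+1) + Real.log (a^2+4))) volume := by
      have i1 : Integrable (fun x : ℝ => 1/(π*(1+x^2)) * Real.log ((x-a)^2+1)) := by
        have := integrable_cauchy_log a 1 one_pos
        simpa using this
      have i2 : Integrable (fun x : ℝ => 1/(π*(1+x^2)) * Real.log (a^2+4)) := by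
        refine (integrable_inv_one_add_sq.const_mul (Real.log (a^2+4)/π)).congr
          (ae_of_all _ fun x => ?_)
        have h1 : (1:ℝ)+x^2 ≠ 0 := by positivity
        field_simp
      refine (i1.add i2).congr (ae_of_all _ fun x => ?_)
      simp only [Pi.add_apply]
      ring
    have m4 : ∀ᵐ x : ℝ ∂volume, Filter.Tendsto (fun c : ℝ =>
        1/(π*(1+x^2)) * (Real.log ((x-a)^2+c^2) - Real.log (a^2+(1+c)^2)))
        Filter.atTop (nhds 0) := by
      refine ae_of_all _ fun x => ?_
      have hr := ratio2_tendsto ((x-a)^2) (a^2) (sq_nonneg a)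
      have hcomp := (Real.continuousAt_log one_ne_zero).tendsto.comp hr
      simp only [Real.log_one] at hcomp
      have hlog : Filter.Tendsto
          (fun c : ℝ => Real.log ((x-a)^2+c^2) - Real.log (a^2+(1+c)^2))
          Filter.atTop (nhds 0) := by
        refine hcomp.congr' ?_
        filter_upwards [Filter.eventually_gt_atTop (0:ℝ)] with c hc
        simp only [Function.comp_apply]
        exact Real.log_div (by positivity) (by positivity)
      have := hlog.const_mul (1/(π*(1+x^2)))
      simpa using this
    have hDCT := MeasureTheory.tendsto_integral_filter_of_dominated_convergence
      (f := fun _ : ℝ => (0:ℝ)) _ m1 m2 m3 m4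
    rw [MeasureTheory.integral_zero] at hDCT
    refine hDCT.congr' ?_
    filter_upwards [Filter.eventually_gt_atTop (0:ℝ)] with c hc
    have i1 : Integrable (fun x : ℝ => 1/(π*(1+x^2)) * Real.log ((x-a)^2+c^2)) :=
      integrable_cauchy_log a c hc
    have i2 : Integrable (fun x : ℝ => 1/(π*(1+x^2)) * Real.log (a^2+(1+c)^2)) := by
      refine (integrable_inv_one_add_sq.const_mul (Real.log (a^2+(1+c)^2)/π)).congr
        (ae_of_all _ fun x => ?_)
      have h1 : (1:ℝ)+x^2 ≠ 0 := by positivity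
      field_simp
    have e1 : (fun x : ℝ =>
        1/(π*(1+x^2)) * (Real.log ((x-a)^2+c^2) - Real.log (a^2+(1+c)^2)))
        = fun x : ℝ => 1/(π*(1+x^2)) * Real.log ((x-a)^2+c^2)
          - 1/(π*(1+x^2)) * Real.log (a^2+(1+c)^2) := funext fun x => by ring
    rw [e1, MeasureTheory.integral_sub i1 i2]
    have e2 : ∫ x : ℝ, 1/(π*(1+x^2)) * Real.log (a^2+(1+c)^2) = Real.log (a^2+(1+c)^2) := by
      have e3 : (fun x : ℝ => 1/(π*(1+x^2)) * Real.log (a^2+(1+c)^2))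
          = fun x : ℝ => (Real.log (a^2+(1+c)^2)/π) * (1+x^2)⁻¹ := funext fun x => by
        have h1 : (1:ℝ)+x^2 ≠ 0 := by positivity
        field_simp
      rw [e3, MeasureTheory.integral_const_mul, integral_univ_inv_one_add_sq]
      field_simp
    rw [e2]
  -- conclude
  have heq2 : (fun _ : ℝ => F b - G b) =ᶠ[Filter.atTop] fun c => F c - G c := by
    filter_upwards [Filter.eventually_gt_atTop (0:ℝ)] with c hc
    exact (hconst c hc).symm
  have hzero := tendsto_nhds_unique (Filter.Tendsto.congr' heq2 tendsto_const_nhds) hlim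
  have hFG : F b = G b := by
    have := sub_eq_zero.mp hzero
    linarith [this]
  exact hFG

lemma pointwise_eq (θ1 θ2 x : ℝ) (h1 : θ1 ∈ Set.Ioo (0:ℝ) 1) (h2 : θ2 ∈ Set.Ioo (0:ℝ) 1) :
    ((1 - θ1) * (1 / (π * (1 + x ^ 2))) + θ1 * (1 / (π * (1 + (x - 1) ^ 2)))) *
      Real.log
        (((1 - θ1) * (1 / (π * (1 + x ^ 2))) + θ1 * (1 / (π * (1 + (x - 1) ^ 2)))) /
          ((1 - θ2) * (1 / (π * (1 + x ^ 2))) + θ2 * (1 / (π * (1 + (x - 1) ^ 2)))))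
    = (1 - θ1) * (1/(π*(1+x^2)) * Real.log ((x-(1-θ1))^2+(Real.sqrt (1+θ1-θ1^2))^2))
      + θ1 * (1/(π*(1+(x-1)^2)) * Real.log ((x-(1-θ1))^2+(Real.sqrt (1+θ1-θ1^2))^2))
      - ((1 - θ1) * (1/(π*(1+x^2)) * Real.log ((x-(1-θ2))^2+(Real.sqrt (1+θ2-θ2^2))^2))
        + θ1 * (1/(π*(1+(x-1)^2)) * Real.log ((x-(1-θ2))^2+(Real.sqrt (1+θ2-θ2^2))^2))) := by
  obtain ⟨h1a, h1b⟩ := h1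
  obtain ⟨h2a, h2b⟩ := h2
  have hs1 : (Real.sqrt (1+θ1-θ1^2))^2 = 1+θ1-θ1^2 := Real.sq_sqrt (by nlinarith)
  have hs2 : (Real.sqrt (1+θ2-θ2^2))^2 = 1+θ2-θ2^2 := Real.sq_sqrt (by nlinarith)
  have hx1 : (0:ℝ) < 1 + x^2 := by positivity
  have hx2 : (0:ℝ) < 1 + (x-1)^2 := by positivity
  have hπ := Real.pi_pos
  have hQ1 : (0:ℝ) < (x-(1-θ1))^2+(Real.sqrt (1+θ1-θ1^2))^2 := by
    rw [hs1]; nlinarith [sq_nonneg (x-(1-θ1))]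
  have hQ2 : (0:ℝ) < (x-(1-θ2))^2+(Real.sqrt (1+θ2-θ2^2))^2 := by
    rw [hs2]; nlinarith [sq_nonneg (x-(1-θ2))]
  have hD : (0:ℝ) < π * ((1+x^2)*(1+(x-1)^2)) := by positivity
  have hm1 : (1 - θ1) * (1 / (π * (1 + x ^ 2))) + θ1 * (1 / (π * (1 + (x - 1) ^ 2)))
      = ((x-(1-θ1))^2+(Real.sqrt (1+θ1-θ1^2))^2) / (π * ((1+x^2)*(1+(x-1)^2))) := by
    rw [hs1]; field_simp; ring
  have hm2 : (1 - θ2) * (1 / (π * (1 + x ^ 2))) + θ2 * (1 / (π * (1 + (x - 1) ^ 2)))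
      = ((x-(1-θ2))^2+(Real.sqrt (1+θ2-θ2^2))^2) / (π * ((1+x^2)*(1+(x-1)^2))) := by
    rw [hs2]; field_simp; ring
  have hm1pos : (0:ℝ) < (1 - θ1) * (1 / (π * (1 + x ^ 2)))
      + θ1 * (1 / (π * (1 + (x - 1) ^ 2))) := by
    have t1 : (0:ℝ) < 1 - θ1 := by linarith
    have : (0:ℝ) < 1 / (π * (1 + x ^ 2)) := by positivity
    have : (0:ℝ) < 1 / (π * (1 + (x-1) ^ 2)) := by positivity
    positivity
  have hm2pos : (0:ℝ) < (1 - θ2) * (1 / (π * (1 + x ^ 2)))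
      + θ2 * (1 / (π * (1 + (x - 1) ^ 2))) := by
    have t1 : (0:ℝ) < 1 - θ2 := by linarith
    positivity
  have hlog : Real.log
      (((1 - θ1) * (1 / (π * (1 + x ^ 2))) + θ1 * (1 / (π * (1 + (x - 1) ^ 2)))) /
        ((1 - θ2) * (1 / (π * (1 + x ^ 2))) + θ2 * (1 / (π * (1 + (x - 1) ^ 2)))))
      = Real.log ((x-(1-θ1))^2+(Real.sqrt (1+θ1-θ1^2))^2)
        - Real.log ((x-(1-θ2))^2+(Real.sqrt (1+θ2-θ2^2))^2) := by
    rw [Real.log_div hm1pos.ne' hm2pos.ne', hm1, hm2,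
      Real.log_div hQ1.ne' hD.ne', Real.log_div hQ2.ne' hD.ne']
    ring
  rw [hlog]
  ring

/-- Closed form of the Kullback–Leibler divergence between two mixtures of the
prescribed Cauchy components `p_{0,1}` and `p_{1,1}`. -/
theorem kl_cauchy_mixtures_0111 (θ1 θ2 : ℝ)
    (hθ1 : θ1 ∈ Set.Ioo (0 : ℝ) 1) (hθ2 : θ2 ∈ Set.Ioo (0 : ℝ) 1) :
    ∫ x : ℝ,
        ((1 - θ1) * (1 / (π * (1 + x ^ 2))) + θ1 * (1 / (π * (1 + (x - 1) ^ 2)))) *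
          Real.log
            (((1 - θ1) * (1 / (π * (1 + x ^ 2))) + θ1 * (1 / (π * (1 + (x - 1) ^ 2)))) /
              ((1 - θ2) * (1 / (π * (1 + x ^ 2))) + θ2 * (1 / (π * (1 + (x - 1) ^ 2))))) =
      θ1 * Real.log (((2 * Real.sqrt (1 + θ1 - θ1 ^ 2) + θ1 + 2) *
            (2 * Real.sqrt (1 + θ2 - θ2 ^ 2) - θ2 + 3)) /
          ((2 * Real.sqrt (1 + θ1 - θ1 ^ 2) - θ1 + 3) *
            (2 * Real.sqrt (1 + θ2 - θ2 ^ 2) + θ2 + 2))) +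
        Real.log ((2 * Real.sqrt (1 + θ1 - θ1 ^ 2) - θ1 + 3) /
          (2 * Real.sqrt (1 + θ2 - θ2 ^ 2) - θ2 + 3)) := by
  obtain ⟨h1a, h1b⟩ := hθ1
  obtain ⟨h2a, h2b⟩ := hθ2
  have hs1sq : (Real.sqrt (1+θ1-θ1^2))^2 = 1+θ1-θ1^2 := Real.sq_sqrt (by nlinarith)
  have hs2sq : (Real.sqrt (1+θ2-θ2^2))^2 = 1+θ2-θ2^2 := Real.sq_sqrt (by nlinarith)
  have hs1pos : 0 < Real.sqrt (1+θ1-θ1^2) := Real.sqrt_pos.mpr (by nlinarith)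
  have hs2pos : 0 < Real.sqrt (1+θ2-θ2^2) := Real.sqrt_pos.mpr (by nlinarith)
  set s1 := Real.sqrt (1+θ1-θ1^2)
  set s2 := Real.sqrt (1+θ2-θ2^2)
  -- integrability of the four pieces
  have iA1 : Integrable (fun x : ℝ => 1/(π*(1+x^2)) * Real.log ((x-(1-θ1))^2+s1^2)) :=
    integrable_cauchy_log (1-θ1) s1 hs1pos
  have iA2 : Integrable (fun x : ℝ => 1/(π*(1+x^2)) * Real.log ((x-(1-θ2))^2+s2^2)) :=
    integrable_cauchy_log (1-θ2) s2 hs2pos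
  have iB1 : Integrable (fun x : ℝ => 1/(π*(1+(x-1)^2)) * Real.log ((x-(1-θ1))^2+s1^2)) := by
    have hbase := integrable_cauchy_log (-θ1) s1 hs1pos
    have := hbase.comp_sub_right 1
    refine this.congr (ae_of_all _ fun x => ?_)
    beta_reduce
    rw [show x - 1 - -θ1 = x - (1-θ1) from by ring]
  have iB2 : Integrable (fun x : ℝ => 1/(π*(1+(x-1)^2)) * Real.log ((x-(1-θ2))^2+s2^2)) := by
    have hbase := integrable_cauchy_log (-θ2) s2 hs2pos
    have := hbase.comp_sub_right 1
    refine this.congr (ae_of_all _ fun x => ?_)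
    beta_reduce
    rw [show x - 1 - -θ2 = x - (1-θ2) from by ring]
  -- values of the four integrals
  have vA1 : ∫ x : ℝ, 1/(π*(1+x^2)) * Real.log ((x-(1-θ1))^2+s1^2)
      = Real.log ((1-θ1)^2+(1+s1)^2) :=
    cauchy_log_int (1-θ1) s1 (by intro h; nlinarith [h]) hs1pos
  have vA2 : ∫ x : ℝ, 1/(π*(1+x^2)) * Real.log ((x-(1-θ2))^2+s2^2)
      = Real.log ((1-θ2)^2+(1+s2)^2) :=
    cauchy_log_int (1-θ2) s2 (by intro h; nlinarith [h]) hs2pos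
  have vB1 : ∫ x : ℝ, 1/(π*(1+(x-1)^2)) * Real.log ((x-(1-θ1))^2+s1^2)
      = Real.log ((-θ1)^2+(1+s1)^2) := by
    rw [show (fun x : ℝ => 1/(π*(1+(x-1)^2)) * Real.log ((x-(1-θ1))^2+s1^2))
      = fun x : ℝ => (fun y : ℝ => 1/(π*(1+y^2)) * Real.log ((y-(-θ1))^2+s1^2)) (x - 1)
      from funext fun x => by beta_reduce; rw [show x - 1 - -θ1 = x - (1-θ1) from by ring]]
    rw [MeasureTheory.integral_sub_right_eq_self
      (fun y : ℝ => 1/(π*(1+y^2)) * Real.log ((y-(-θ1))^2+s1^2)) 1]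
    exact cauchy_log_int (-θ1) s1 (by intro h; nlinarith [h]) hs1pos
  have vB2 : ∫ x : ℝ, 1/(π*(1+(x-1)^2)) * Real.log ((x-(1-θ2))^2+s2^2)
      = Real.log ((-θ2)^2+(1+s2)^2) := by
    rw [show (fun x : ℝ => 1/(π*(1+(x-1)^2)) * Real.log ((x-(1-θ2))^2+s2^2))
      = fun x : ℝ => (fun y : ℝ => 1/(π*(1+y^2)) * Real.log ((y-(-θ2))^2+s2^2)) (x - 1)
      from funext fun x => by beta_reduce; rw [show x - 1 - -θ2 = x - (1-θ2) from by ring]]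
    rw [MeasureTheory.integral_sub_right_eq_self
      (fun y : ℝ => 1/(π*(1+y^2)) * Real.log ((y-(-θ2))^2+s2^2)) 1]
    exact cauchy_log_int (-θ2) s2 (by intro h; nlinarith [h]) hs2pos
  -- rewrite the integrand
  rw [MeasureTheory.integral_congr_ae (ae_of_all _ fun x =>
    pointwise_eq θ1 θ2 x ⟨h1a, h1b⟩ ⟨h2a, h2b⟩)]
  have J1 : Integrable (fun x : ℝ =>
      (1-θ1) * (1/(π*(1+x^2)) * Real.log ((x-(1-θ1))^2+s1^2))) := iA1.const_mul _
  have J2 : Integrable (fun x : ℝ =>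
      θ1 * (1/(π*(1+(x-1)^2)) * Real.log ((x-(1-θ1))^2+s1^2))) := iB1.const_mul _
  have J3 : Integrable (fun x : ℝ =>
      (1-θ1) * (1/(π*(1+x^2)) * Real.log ((x-(1-θ2))^2+s2^2))) := iA2.const_mul _
  have J4 : Integrable (fun x : ℝ =>
      θ1 * (1/(π*(1+(x-1)^2)) * Real.log ((x-(1-θ2))^2+s2^2))) := iB2.const_mul _
  have I1 : Integrable (fun x : ℝ =>
      (1-θ1) * (1/(π*(1+x^2)) * Real.log ((x-(1-θ1))^2+s1^2))
      + θ1 * (1/(π*(1+(x-1)^2)) * Real.log ((x-(1-θ1))^2+s1^2))) := J1.add J2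
  have I2 : Integrable (fun x : ℝ =>
      (1-θ1) * (1/(π*(1+x^2)) * Real.log ((x-(1-θ2))^2+s2^2))
      + θ1 * (1/(π*(1+(x-1)^2)) * Real.log ((x-(1-θ2))^2+s2^2))) := J3.add J4
  rw [MeasureTheory.integral_sub I1 I2, MeasureTheory.integral_add J1 J2,
    MeasureTheory.integral_add J3 J4,
    MeasureTheory.integral_const_mul, MeasureTheory.integral_const_mul,
    MeasureTheory.integral_const_mul, MeasureTheory.integral_const_mul,
    vA1, vA2, vB1, vB2]
  -- final algebra
  have e1 : (1-θ1)^2+(1+s1)^2 = 2*s1 - θ1 + 3 := by linear_combination hs1sq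
  have e2 : (1-θ2)^2+(1+s2)^2 = 2*s2 - θ2 + 3 := by linear_combination hs2sq
  have e3 : (-θ1)^2+(1+s1)^2 = 2*s1 + θ1 + 2 := by linear_combination hs1sq
  have e4 : (-θ2)^2+(1+s2)^2 = 2*s2 + θ2 + 2 := by linear_combination hs2sq
  rw [e1, e2, e3, e4]
  have p1 : (0:ℝ) < 2*s1 + θ1 + 2 := by linarith
  have p2 : (0:ℝ) < 2*s2 + θ2 + 2 := by linarith
  have m1 : (0:ℝ) < 2*s1 - θ1 + 3 := by linarith
  have m2 : (0:ℝ) < 2*s2 - θ2 + 3 := by linarith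
  rw [Real.log_div (by positivity) (by positivity), Real.log_mul p1.ne' m2.ne',
    Real.log_mul m1.ne' p2.ne', Real.log_div m1.ne' m2.ne']
  ring
end

section
/- Let p_{0,1}(x) = 1/(π(1+x²)) and p_{1,1}(x) = 1/(π(1+(x−1)²)), and for θ ∈ (0,1) let m_θ = (1−θ)·p_{0,1} + θ·p_{1,1}, F(θ) = ∫_ℝ m_θ(x)·log m_θ(x) dx, and η(θ) = log( (2·√(1+θ−θ²)+θ+2) / (2·√(1+θ−θ²)−θ+3) ). Then for every θ ∈ (0,1), the dual Legendre potential expressed in the θ-coordinate satisfies θ·η(θ) − F(θ) = log( 20·π / (2·√(1+θ−θ²)−θ+3) ). -/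
open MeasureTheory Real Filter Set Topology

namespace DualPotAux


lemma sqrt_add_le' {a b : ℝ} (ha : 0 ≤ a) (hb : 0 ≤ b) :
    Real.sqrt (a + b) ≤ Real.sqrt a + Real.sqrt b := by
  have h : a + b ≤ (Real.sqrt a + Real.sqrt b) ^ 2 := by
    nlinarith [Real.sq_sqrt ha, Real.sq_sqrt hb, Real.sqrt_nonneg a, Real.sqrt_nonneg b]
  calc Real.sqrt (a + b) ≤ Real.sqrt ((Real.sqrt a + Real.sqrt b) ^ 2) := Real.sqrt_le_sqrt h
    _ = _ := Real.sqrt_sq (by positivity)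

lemma integrable_cauchy (l : ℝ) : Integrable fun x : ℝ => (1 + (x - l) ^ 2)⁻¹ :=
  integrable_inv_one_add_sq.comp_sub_right l

lemma integral_cauchy (l : ℝ) : ∫ x : ℝ, (1 + (x - l) ^ 2)⁻¹ = π := by
  rw [show (∫ x : ℝ, (1 + (x - l) ^ 2)⁻¹) = ∫ x : ℝ, (fun y : ℝ => (1 + y ^ 2)⁻¹) (x - l) from rfl,
    integral_sub_right_eq_self (fun y : ℝ => (1 + y ^ 2)⁻¹) l]
  exact integral_univ_inv_one_add_sq

lemma integrable_sqrt_abs_mul : Integrable fun x : ℝ => (1 + x ^ 2)⁻¹ * Real.sqrt |x| := by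
  have hcont : Continuous fun x : ℝ => (1 + x ^ 2)⁻¹ * Real.sqrt |x| := by
    exact ((continuous_const.add (continuous_pow 2)).inv₀ (fun x => by show (1:ℝ) + x ^ 2 ≠ 0; positivity)).mul
      continuous_abs.sqrt
  have key : IntegrableOn (fun x : ℝ => (1 + x ^ 2)⁻¹ * Real.sqrt |x|) (Ici (1 : ℝ)) := by
    rw [integrableOn_Ici_iff_integrableOn_Ioi]
    refine Integrable.mono' (g := fun x : ℝ => x ^ (-(3 : ℝ)/2))
      (integrableOn_Ioi_rpow_of_lt (by norm_num) one_pos)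
      hcont.aestronglyMeasurable.restrict ?_
    filter_upwards [ae_restrict_mem measurableSet_Ioi] with x (hx : 1 < x)
    have hx0 : (0 : ℝ) < x := lt_trans one_pos hx
    rw [Real.norm_eq_abs, abs_of_nonneg (by positivity)]
    have h1 : Real.sqrt |x| = x ^ ((1 : ℝ)/2) := by
      rw [abs_of_pos hx0, Real.sqrt_eq_rpow]
    have h2 : (1 + x ^ 2)⁻¹ ≤ x ^ (-(2 : ℝ)) := by
      rw [Real.rpow_neg hx0.le, show ((2:ℝ)) = ((2:ℕ):ℝ) by norm_num, Real.rpow_natCast]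
      exact inv_anti₀ (by positivity) (by nlinarith)
    calc (1 + x ^ 2)⁻¹ * Real.sqrt |x| ≤ x ^ (-(2:ℝ)) * x ^ ((1:ℝ)/2) := by
          rw [h1]; exact mul_le_mul_of_nonneg_right h2 (by positivity)
      _ = x ^ (-(3:ℝ)/2) := by
          rw [← Real.rpow_add hx0]; norm_num
  have keyneg : IntegrableOn (fun x : ℝ => (1 + x ^ 2)⁻¹ * Real.sqrt |x|) (Iic (-1 : ℝ)) := by
    have hpre : (Neg.neg ⁻¹' (Ici (1:ℝ)) : Set ℝ) = Iic (-1 : ℝ) := by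
      ext x; simp [le_neg]
    have := (Measure.measurePreserving_neg (volume : Measure ℝ)).integrableOn_comp_preimage
      (Homeomorph.neg ℝ).measurableEmbedding
      (f := fun x : ℝ => (1 + x ^ 2)⁻¹ * Real.sqrt |x|) (s := Ici (1:ℝ))
    rw [hpre] at this
    rw [show (fun x : ℝ => (1 + x ^ 2)⁻¹ * Real.sqrt |x|) =
      ((fun x : ℝ => (1 + x ^ 2)⁻¹ * Real.sqrt |x|) ∘ Neg.neg) from funext fun x => by
        simp [Function.comp, neg_sq, abs_neg]]
    exact this.mpr key
  have mid : IntegrableOn (fun x : ℝ => (1 + x ^ 2)⁻¹ * Real.sqrt |x|) (Icc (-1 : ℝ) 1) :=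
    hcont.integrableOn_Icc
  rw [← integrableOn_univ, show (univ : Set ℝ) = Iic (-1 : ℝ) ∪ (Icc (-1 : ℝ) 1 ∪ Ici 1) by
    rw [Icc_union_Ici_eq_Ici (by norm_num), Iic_union_Ici]]
  exact (keyneg.union (mid.union key))


lemma abs_log_quad_le (c : ℝ) {d : ℝ} (hd : 0 < d) (x : ℝ) :
    |Real.log ((x - c) ^ 2 + d ^ 2)| ≤
      2 * |Real.log d| + 4 * (Real.sqrt |x - c| + Real.sqrt d) := by
  set u : ℝ := (x - c) ^ 2 + d ^ 2 with hu
  have hu0 : 0 < u := by positivity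
  have hge : 2 * Real.log d ≤ Real.log u := by
    rw [show (2 : ℝ) * Real.log d = Real.log (d ^ 2) by
      rw [Real.log_pow]; push_cast; ring]
    exact Real.log_le_log (by positivity) (by nlinarith)
  have hle4 : Real.log u ≤ 4 * u ^ ((1 : ℝ)/4) := by
    have := Real.log_le_rpow_div hu0.le (show (0:ℝ) < 1/4 by norm_num)
    calc Real.log u ≤ u ^ ((1:ℝ)/4) / (1/4) := this
      _ = 4 * u ^ ((1:ℝ)/4) := by ring
  have hrp : u ^ ((1 : ℝ)/4) ≤ Real.sqrt |x - c| + Real.sqrt d := by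
    have h1 : u ≤ (|x - c| + d) ^ 2 := by
      have : (x - c) ^ 2 = |x - c| ^ 2 := (sq_abs _).symm
      nlinarith [abs_nonneg (x - c), hd.le]
    have h2 : u ^ ((1:ℝ)/4) ≤ ((|x - c| + d) ^ 2) ^ ((1:ℝ)/4) :=
      Real.rpow_le_rpow hu0.le h1 (by norm_num)
    have h3 : ((|x - c| + d) ^ 2) ^ ((1:ℝ)/4) = Real.sqrt (|x - c| + d) := by
      rw [← Real.rpow_natCast (|x - c| + d) 2, ← Real.rpow_mul (by positivity),
        Real.sqrt_eq_rpow]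
      norm_num
    calc u ^ ((1:ℝ)/4) ≤ Real.sqrt (|x - c| + d) := h3 ▸ h2
      _ ≤ _ := sqrt_add_le' (abs_nonneg _) hd.le
  have h4 : (0 : ℝ) ≤ u ^ ((1:ℝ)/4) := Real.rpow_nonneg hu0.le _
  rw [abs_le]
  constructor
  · have := neg_abs_le (Real.log d)
    nlinarith [Real.sqrt_nonneg |x - c|, Real.sqrt_nonneg d]
  · have := abs_nonneg (Real.log d)
    nlinarith

lemma integrable_cauchy_log (l c : ℝ) {d : ℝ} (hd : 0 < d) :
    Integrable fun x : ℝ => (1 + (x - l) ^ 2)⁻¹ * Real.log ((x - c) ^ 2 + d ^ 2) := by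
  have hcont : Continuous fun x : ℝ =>
      (1 + (x - l) ^ 2)⁻¹ * Real.log ((x - c) ^ 2 + d ^ 2) := by
    refine Continuous.mul ?_ (Continuous.log (by continuity) (fun x => by positivity))
    exact Continuous.inv₀ (by continuity) (fun x => by positivity)
  set K : ℝ := 2 * |Real.log d| + 4 * Real.sqrt d + 4 * Real.sqrt |l - c| with hK
  have hmaj : Integrable fun x : ℝ =>
      K * (1 + (x - l) ^ 2)⁻¹ + 4 * ((1 + (x - l) ^ 2)⁻¹ * Real.sqrt |x - l|) := by
    refine Integrable.add ((integrable_cauchy l).const_mul K) ?_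
    exact (integrable_sqrt_abs_mul.comp_sub_right l).const_mul 4
  refine hmaj.mono' hcont.aestronglyMeasurable ?_
  filter_upwards with x
  rw [Real.norm_eq_abs, abs_mul, abs_of_nonneg (inv_nonneg.2 (by positivity))]
  have hb := abs_log_quad_le c hd x
  have hsq : Real.sqrt |x - c| ≤ Real.sqrt |x - l| + Real.sqrt |l - c| := by
    calc Real.sqrt |x - c| ≤ Real.sqrt (|x - l| + |l - c|) :=
        Real.sqrt_le_sqrt (abs_sub_le x l c)
      _ ≤ _ := sqrt_add_le' (abs_nonneg _) (abs_nonneg _)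
  have hb2 : |Real.log ((x - c) ^ 2 + d ^ 2)| ≤ K + 4 * Real.sqrt |x - l| := by
    rw [hK]; nlinarith
  have hpos : (0:ℝ) ≤ (1 + (x - l) ^ 2)⁻¹ := inv_nonneg.2 (by positivity)
  calc (1 + (x - l) ^ 2)⁻¹ * |Real.log ((x - c) ^ 2 + d ^ 2)|
      ≤ (1 + (x - l) ^ 2)⁻¹ * (K + 4 * Real.sqrt |x - l|) :=
        mul_le_mul_of_nonneg_left hb2 hpos
    _ = K * (1 + (x - l) ^ 2)⁻¹ + 4 * ((1 + (x - l) ^ 2)⁻¹ * Real.sqrt |x - l|) := by ring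


lemma tendsto_inv_atBot_zero'' : Tendsto (fun x : ℝ => x⁻¹) atBot (𝓝 0) := by
  have := (tendsto_inv_atTop_zero.comp (tendsto_neg_atBot_atTop (G := ℝ))).neg
  simp only [Function.comp] at this
  simpa [inv_neg] using this

lemma tendsto_ratio_atTop (l c d : ℝ) (hd : 0 < d) :
    Tendsto (fun x : ℝ => (1 + (x - l) ^ 2) / ((x - c) ^ 2 + d ^ 2)) atTop (𝓝 1) ∧
    Tendsto (fun x : ℝ => (1 + (x - l) ^ 2) / ((x - c) ^ 2 + d ^ 2)) atBot (𝓝 1) := by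
  set g : ℝ → ℝ := fun t => (t ^ 2 + (1 - l * t) ^ 2) / ((1 - c * t) ^ 2 + (d * t) ^ 2) with hgdef
  have hg : Tendsto g (𝓝 0) (𝓝 1) := by
    have hca : ContinuousAt g 0 := by
      apply ContinuousAt.div (by fun_prop) (by fun_prop)
      norm_num
    have hg0 : g 0 = 1 := by simp [hgdef]
    simpa [hg0] using hca.tendsto
  have heq : ∀ x : ℝ, x ≠ 0 →
      g x⁻¹ = (1 + (x - l) ^ 2) / ((x - c) ^ 2 + d ^ 2) := by
    intro x hx
    have h2 : (x - c) ^ 2 + d ^ 2 ≠ 0 := by positivity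
    simp only [hgdef]
    field_simp
    all_goals ring
  constructor
  · refine (hg.comp tendsto_inv_atTop_zero).congr' ?_
    filter_upwards [eventually_ne_atTop (0 : ℝ)] with x hx using heq x hx
  · refine (hg.comp tendsto_inv_atBot_zero'').congr' ?_
    filter_upwards [eventually_ne_atBot (0 : ℝ)] with x hx using heq x hx

lemma tendsto_frac_atTop (l : ℝ) :
    Tendsto (fun x : ℝ => (x - l) / (1 + (x - l) ^ 2)) atTop (𝓝 0) ∧
    Tendsto (fun x : ℝ => (x - l) / (1 + (x - l) ^ 2)) atBot (𝓝 0) := by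
  set g : ℝ → ℝ := fun t => (t * (1 - l * t)) / (t ^ 2 + (1 - l * t) ^ 2) with hgdef
  have hg : Tendsto g (𝓝 0) (𝓝 0) := by
    have hca : ContinuousAt g 0 := by
      apply ContinuousAt.div (by fun_prop) (by fun_prop)
      norm_num
    have hg0 : g 0 = 0 := by simp [hgdef]
    simpa [hg0] using hca.tendsto
  have heq : ∀ x : ℝ, x ≠ 0 →
      g x⁻¹ = (x - l) / (1 + (x - l) ^ 2) := by
    intro x hx
    simp only [hgdef]
    field_simp
    all_goals ring
  constructor
  · refine (hg.comp tendsto_inv_atTop_zero).congr' ?_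
    filter_upwards [eventually_ne_atTop (0 : ℝ)] with x hx using heq x hx
  · refine (hg.comp tendsto_inv_atBot_zero'').congr' ?_
    filter_upwards [eventually_ne_atBot (0 : ℝ)] with x hx using heq x hx

lemma tendsto_arctan_shift_atTop (a : ℝ) :
    Tendsto (fun x : ℝ => Real.arctan (x - a)) atTop (𝓝 (π / 2)) := by
  have h1 : Tendsto (fun x : ℝ => x - a) atTop atTop := by
    simpa [sub_eq_add_neg] using tendsto_atTop_add_const_right atTop (-a) tendsto_id
  exact (tendsto_nhds_of_tendsto_nhdsWithin Real.tendsto_arctan_atTop).comp h1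

lemma tendsto_arctan_shift_atBot (a : ℝ) :
    Tendsto (fun x : ℝ => Real.arctan (x - a)) atBot (𝓝 (-(π / 2))) := by
  have h1 : Tendsto (fun x : ℝ => x - a) atBot atBot := by
    simpa [sub_eq_add_neg] using tendsto_atBot_add_const_right atBot (-a) tendsto_id
  exact (tendsto_nhds_of_tendsto_nhdsWithin Real.tendsto_arctan_atBot).comp h1

lemma tendsto_arctan_shift_div_atTop (a : ℝ) {d : ℝ} (hd : 0 < d) :
    Tendsto (fun x : ℝ => Real.arctan ((x - a) / d)) atTop (𝓝 (π / 2)) := by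
  have h1 : Tendsto (fun x : ℝ => (x - a) / d) atTop atTop := by
    refine Tendsto.atTop_div_const hd ?_
    simpa [sub_eq_add_neg] using tendsto_atTop_add_const_right atTop (-a) tendsto_id
  exact (tendsto_nhds_of_tendsto_nhdsWithin Real.tendsto_arctan_atTop).comp h1

lemma tendsto_arctan_shift_div_atBot (a : ℝ) {d : ℝ} (hd : 0 < d) :
    Tendsto (fun x : ℝ => Real.arctan ((x - a) / d)) atBot (𝓝 (-(π / 2))) := by
  have h1 : Tendsto (fun x : ℝ => (x - a) / d) atBot atBot := by
    refine Tendsto.atBot_div_const hd ?_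
    simpa [sub_eq_add_neg] using tendsto_atBot_add_const_right atBot (-a) tendsto_id
  exact (tendsto_nhds_of_tendsto_nhdsWithin Real.tendsto_arctan_atBot).comp h1

lemma integrable_rat (l c : ℝ) {d : ℝ} (hd : 0 < d) :
    Integrable fun x : ℝ => ((1 + (x - l) ^ 2) * ((x - c) ^ 2 + d ^ 2))⁻¹ := by
  have hcont : Continuous fun x : ℝ => ((1 + (x - l) ^ 2) * ((x - c) ^ 2 + d ^ 2))⁻¹ :=
    Continuous.inv₀ (by fun_prop) (fun x => by positivity)
  refine ((integrable_cauchy l).const_mul ((d ^ 2)⁻¹)).mono' hcont.aestronglyMeasurable ?_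
  filter_upwards with x
  rw [Real.norm_eq_abs, abs_of_nonneg (by positivity)]
  calc ((1 + (x - l) ^ 2) * ((x - c) ^ 2 + d ^ 2))⁻¹
      ≤ ((1 + (x - l) ^ 2) * d ^ 2)⁻¹ := inv_anti₀ (by positivity) (by nlinarith)
    _ = (d ^ 2)⁻¹ * (1 + (x - l) ^ 2)⁻¹ := by rw [mul_inv, mul_comm]


set_option maxHeartbeats 1000000 in
lemma deriv_value_eq (u e d : ℝ) (hd0 : d ≠ 0)
    (hΔ0 : (e ^ 2 + (d + 1) ^ 2) * (e ^ 2 + (d - 1) ^ 2) ≠ 0) :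
    ((1 + u ^ 2) * ((u - e) ^ 2 + d ^ 2))⁻¹
      = 2 * e / ((e ^ 2 + (d + 1) ^ 2) * (e ^ 2 + (d - 1) ^ 2)) / 2 *
          (2 * u / (1 + u ^ 2) - 2 * (u - e) / ((u - e) ^ 2 + d ^ 2)) +
        (e ^ 2 + d ^ 2 - 1) / ((e ^ 2 + (d + 1) ^ 2) * (e ^ 2 + (d - 1) ^ 2)) *
          (1 / (1 + u ^ 2)) +
        (1 + e ^ 2 - d ^ 2) / ((e ^ 2 + (d + 1) ^ 2) * (e ^ 2 + (d - 1) ^ 2)) / d *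
          (d / ((u - e) ^ 2 + d ^ 2)) := by
  have hP0 : (1 : ℝ) + u ^ 2 ≠ 0 := by positivity
  have hQ0 : (u - e) ^ 2 + d ^ 2 ≠ 0 := by positivity
  have hΔ1 := left_ne_zero_of_mul hΔ0
  have hΔ2 := right_ne_zero_of_mul hΔ0
  field_simp
  ring

set_option maxHeartbeats 1000000 in
lemma limit_value_eq (e : ℝ) {d : ℝ} (hd : 0 < d)
    (hΔ2 : e ^ 2 + (d - 1) ^ 2 ≠ 0) :
    π * (1 + d) / (d * (e ^ 2 + (1 + d) ^ 2))
      = 2 * e / ((e ^ 2 + (d + 1) ^ 2) * (e ^ 2 + (d - 1) ^ 2)) / 2 * 0 +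
        (e ^ 2 + d ^ 2 - 1) / ((e ^ 2 + (d + 1) ^ 2) * (e ^ 2 + (d - 1) ^ 2)) * (π / 2) +
        (1 + e ^ 2 - d ^ 2) / ((e ^ 2 + (d + 1) ^ 2) * (e ^ 2 + (d - 1) ^ 2)) / d * (π / 2) -
        (2 * e / ((e ^ 2 + (d + 1) ^ 2) * (e ^ 2 + (d - 1) ^ 2)) / 2 * 0 +
         (e ^ 2 + d ^ 2 - 1) / ((e ^ 2 + (d + 1) ^ 2) * (e ^ 2 + (d - 1) ^ 2)) * (-(π / 2)) +
         (1 + e ^ 2 - d ^ 2) / ((e ^ 2 + (d + 1) ^ 2) * (e ^ 2 + (d - 1) ^ 2)) / d *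
           (-(π / 2))) := by
  have h1 : (0 : ℝ) < e ^ 2 + (d + 1) ^ 2 := by
    nlinarith [sq_nonneg e, mul_pos (by linarith : (0:ℝ) < d + 1) (by linarith : (0:ℝ) < d + 1)]
  have h2 : (0 : ℝ) < e ^ 2 + (1 + d) ^ 2 := by
    nlinarith [sq_nonneg e, mul_pos (by linarith : (0:ℝ) < 1 + d) (by linarith : (0:ℝ) < 1 + d)]
  have hd0 : d ≠ 0 := ne_of_gt hd
  field_simp
  ring

set_option maxHeartbeats 1000000 in
lemma ratint (l c : ℝ) {d : ℝ} (hd : 0 < d) :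
    ∫ x : ℝ, ((1 + (x - l) ^ 2) * ((x - c) ^ 2 + d ^ 2))⁻¹
      = π * (1 + d) / (d * ((l - c) ^ 2 + (1 + d) ^ 2)) := by
  have hfc : Continuous fun x : ℝ => ((1 + (x - l) ^ 2) * ((x - c) ^ 2 + d ^ 2))⁻¹ :=
    Continuous.inv₀ (by fun_prop) (fun x => by positivity)
  have hint := integrable_rat l c hd
  have htend : Tendsto (fun R : ℝ => ∫ x in (-R)..R,
      ((1 + (x - l) ^ 2) * ((x - c) ^ 2 + d ^ 2))⁻¹) atTop
      (𝓝 (∫ x : ℝ, ((1 + (x - l) ^ 2) * ((x - c) ^ 2 + d ^ 2))⁻¹)) :=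
    intervalIntegral_tendsto_integral hint tendsto_neg_atTop_atBot tendsto_id
  suffices hlim : Tendsto (fun R : ℝ => ∫ x in (-R)..R,
      ((1 + (x - l) ^ 2) * ((x - c) ^ 2 + d ^ 2))⁻¹) atTop
      (𝓝 (π * (1 + d) / (d * ((l - c) ^ 2 + (1 + d) ^ 2)))) by
    exact tendsto_nhds_unique htend hlim
  by_cases hdeg : c = l ∧ d = 1
  · -- degenerate case
    obtain ⟨hcl, hd1⟩ := hdeg
    subst hcl hd1
    have hderiv : ∀ x : ℝ, HasDerivAt
        (fun x => (Real.arctan (x - c) + (x - c) / (1 + (x - c) ^ 2)) / 2)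
        (((1 + (x - c) ^ 2) * ((x - c) ^ 2 + 1 ^ 2))⁻¹) x := by
      intro x
      have h0 : HasDerivAt (fun y : ℝ => y - c) 1 x := (hasDerivAt_id x).sub_const c
      have h1 : HasDerivAt (fun y : ℝ => Real.arctan (y - c)) (1 / (1 + (x - c) ^ 2)) x := by
        simpa [Function.comp_def] using (Real.hasDerivAt_arctan (x - c)).comp x h0
      have h2 : HasDerivAt (fun y : ℝ => 1 + (y - c) ^ 2) (2 * (x - c)) x := by
        simpa using (h0.pow 2).const_add 1
      have h3 : HasDerivAt (fun y : ℝ => (y - c) / (1 + (y - c) ^ 2))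
          ((1 * (1 + (x - c) ^ 2) - (x - c) * (2 * (x - c))) / (1 + (x - c) ^ 2) ^ 2) x :=
        h0.div h2 (by positivity)
      have h4 := (h1.add h3).div_const 2
      refine h4.congr_deriv (Eq.symm ?_)
      have hpos : (1 : ℝ) + (x - c) ^ 2 ≠ 0 := by positivity
      field_simp
      ring
    have hIcc : ∀ R : ℝ, (∫ x in (-R)..R, ((1 + (x - c) ^ 2) * ((x - c) ^ 2 + 1 ^ 2))⁻¹)
        = (Real.arctan (R - c) + (R - c) / (1 + (R - c) ^ 2)) / 2 -
          (Real.arctan (-R - c) + (-R - c) / (1 + (-R - c) ^ 2)) / 2 := fun R =>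
      intervalIntegral.integral_eq_sub_of_hasDerivAt (fun x _ => hderiv x)
        (hfc.intervalIntegrable _ _)
    have hHtop : Tendsto (fun R : ℝ =>
        (Real.arctan (R - c) + (R - c) / (1 + (R - c) ^ 2)) / 2) atTop
        (𝓝 ((π / 2 + 0) / 2)) :=
      ((tendsto_arctan_shift_atTop c).add (tendsto_frac_atTop c).1).div_const 2
    have hHbot : Tendsto (fun R : ℝ =>
        (Real.arctan (R - c) + (R - c) / (1 + (R - c) ^ 2)) / 2) atBot
        (𝓝 ((-(π / 2) + 0) / 2)) :=
      ((tendsto_arctan_shift_atBot c).add (tendsto_frac_atTop c).2).div_const 2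
    have hfin : Tendsto (fun R : ℝ =>
        (Real.arctan (R - c) + (R - c) / (1 + (R - c) ^ 2)) / 2 -
        (Real.arctan (-R - c) + (-R - c) / (1 + (-R - c) ^ 2)) / 2) atTop
        (𝓝 ((π / 2 + 0) / 2 - (-(π / 2) + 0) / 2)) := by
      refine hHtop.sub ?_
      have := hHbot.comp (tendsto_neg_atTop_atBot (G := ℝ))
      simpa [Function.comp_def] using this
    simp only [hIcc]
    convert hfin using 2
    ring
  · -- nondegenerate case
    obtain ⟨e, he⟩ : ∃ e : ℝ, e = c - l := ⟨c - l, rfl⟩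
    have hΔfac : e ^ 2 + (d - 1) ^ 2 ≠ 0 := by
      intro h
      have h1 : e = 0 := by nlinarith [sq_nonneg e, sq_nonneg (d - 1)]
      have h2 : d = 1 := by nlinarith [sq_nonneg e, sq_nonneg (d - 1)]
      refine hdeg ⟨?_, h2⟩
      have : c - l = 0 := by rw [← he]; exact h1
      linarith
    obtain ⟨Δ, hΔ⟩ : ∃ D : ℝ, D = (e ^ 2 + (d + 1) ^ 2) * (e ^ 2 + (d - 1) ^ 2) :=
      ⟨_, rfl⟩
    have hΔ0 : Δ ≠ 0 := by
      rw [hΔ]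
      refine mul_ne_zero (ne_of_gt ?_) hΔfac
      nlinarith [sq_nonneg e, mul_pos (by linarith : (0:ℝ) < d + 1)
        (by linarith : (0:ℝ) < d + 1)]
    obtain ⟨A, hA⟩ : ∃ A : ℝ, A = 2 * e / Δ := ⟨_, rfl⟩
    obtain ⟨B, hB⟩ : ∃ B : ℝ, B = (e ^ 2 + d ^ 2 - 1) / Δ := ⟨_, rfl⟩
    obtain ⟨Dc, hDc⟩ : ∃ Dc : ℝ, Dc = (1 + e ^ 2 - d ^ 2) / Δ := ⟨_, rfl⟩
    set H : ℝ → ℝ := fun x =>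
      A / 2 * (Real.log (1 + (x - l) ^ 2) - Real.log ((x - c) ^ 2 + d ^ 2)) +
      B * Real.arctan (x - l) + Dc / d * Real.arctan ((x - c) / d) with hH
    have hderiv : ∀ x : ℝ, HasDerivAt H
        (((1 + (x - l) ^ 2) * ((x - c) ^ 2 + d ^ 2))⁻¹) x := by
      intro x
      have h0 : HasDerivAt (fun y : ℝ => y - l) 1 x := (hasDerivAt_id x).sub_const l
      have h0c : HasDerivAt (fun y : ℝ => y - c) 1 x := (hasDerivAt_id x).sub_const c
      have hP : HasDerivAt (fun y : ℝ => 1 + (y - l) ^ 2) (2 * (x - l)) x := by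
        simpa using (h0.pow 2).const_add 1
      have hQ : HasDerivAt (fun y : ℝ => (y - c) ^ 2 + d ^ 2) (2 * (x - c)) x := by
        simpa using (h0c.pow 2).add_const (d ^ 2)
      have hlog1 : HasDerivAt (fun y : ℝ => Real.log (1 + (y - l) ^ 2))
          (2 * (x - l) / (1 + (x - l) ^ 2)) x := hP.log (by positivity)
      have hlog2 : HasDerivAt (fun y : ℝ => Real.log ((y - c) ^ 2 + d ^ 2))
          (2 * (x - c) / ((x - c) ^ 2 + d ^ 2)) x := hQ.log (by positivity)
      have harc1 : HasDerivAt (fun y : ℝ => Real.arctan (y - l)) (1 / (1 + (x - l) ^ 2)) x := by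
        simpa [Function.comp_def] using (Real.hasDerivAt_arctan (x - l)).comp x h0
      have hin : HasDerivAt (fun y : ℝ => (y - c) / d) (1 / d) x := by
        simpa using h0c.div_const d
      have harc2 : HasDerivAt (fun y : ℝ => Real.arctan ((y - c) / d))
          (1 / (1 + ((x - c) / d) ^ 2) * (1 / d)) x := by
        simpa [Function.comp_def] using (Real.hasDerivAt_arctan ((x - c) / d)).comp x hin
      have harc2' : HasDerivAt (fun y : ℝ => Real.arctan ((y - c) / d))
          (d / ((x - c) ^ 2 + d ^ 2)) x := by
        convert harc2 using 1
        have hd0 : d ≠ 0 := ne_of_gt hd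
        have h5 : ((x - c) ^ 2 + d ^ 2) ≠ 0 := by positivity
        field_simp
        ring
      have htot := (((hlog1.sub hlog2).const_mul (A / 2)).add (harc1.const_mul B)).add
        (harc2'.const_mul (Dc / d))
      refine htot.congr_deriv (Eq.symm ?_)
      have hc : x - c = x - l - e := by rw [he]; ring
      rw [hc, hA, hB, hDc, hΔ]
      exact deriv_value_eq (x - l) e d (ne_of_gt hd) (hΔ ▸ hΔ0)
    have hIcc : ∀ R : ℝ, (∫ x in (-R)..R, ((1 + (x - l) ^ 2) * ((x - c) ^ 2 + d ^ 2))⁻¹)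
        = H R - H (-R) := fun R =>
      intervalIntegral.integral_eq_sub_of_hasDerivAt (fun x _ => hderiv x)
        (hfc.intervalIntegrable _ _)
    have hlog_top : Tendsto (fun x : ℝ =>
        Real.log (1 + (x - l) ^ 2) - Real.log ((x - c) ^ 2 + d ^ 2)) atTop (𝓝 0) := by
      have h := (Real.continuousAt_log one_ne_zero).tendsto.comp (tendsto_ratio_atTop l c d hd).1
      rw [Real.log_one] at h
      refine h.congr fun x => ?_
      rw [Function.comp, Real.log_div (by positivity) (by positivity)]
    have hlog_bot : Tendsto (fun x : ℝ =>
        Real.log (1 + (x - l) ^ 2) - Real.log ((x - c) ^ 2 + d ^ 2)) atBot (𝓝 0) := by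
      have h := (Real.continuousAt_log one_ne_zero).tendsto.comp (tendsto_ratio_atTop l c d hd).2
      rw [Real.log_one] at h
      refine h.congr fun x => ?_
      rw [Function.comp, Real.log_div (by positivity) (by positivity)]
    have hHtop : Tendsto H atTop
        (𝓝 (A / 2 * 0 + B * (π / 2) + Dc / d * (π / 2))) :=
      ((hlog_top.const_mul (A / 2)).add
        ((tendsto_arctan_shift_atTop l).const_mul B)).add
        ((tendsto_arctan_shift_div_atTop c hd).const_mul (Dc / d))
    have hHbot : Tendsto H atBot
        (𝓝 (A / 2 * 0 + B * (-(π / 2)) + Dc / d * (-(π / 2)))) :=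
      ((hlog_bot.const_mul (A / 2)).add
        ((tendsto_arctan_shift_atBot l).const_mul B)).add
        ((tendsto_arctan_shift_div_atBot c hd).const_mul (Dc / d))
    have hfin : Tendsto (fun R : ℝ => H R - H (-R)) atTop
        (𝓝 ((A / 2 * 0 + B * (π / 2) + Dc / d * (π / 2)) -
          (A / 2 * 0 + B * (-(π / 2)) + Dc / d * (-(π / 2))))) := by
      refine hHtop.sub ?_
      have := hHbot.comp (tendsto_neg_atTop_atBot (G := ℝ))
      simpa [Function.comp_def] using this
    simp only [hIcc]
    convert hfin using 2
    have h1 : (l - c) ^ 2 = e ^ 2 := by rw [he]; ring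
    rw [h1, hA, hB, hDc, hΔ]
    exact limit_value_eq e hd hΔfac


lemma integrable_pcauchy_log (l c : ℝ) {d : ℝ} (hd : 0 < d) :
    Integrable fun x : ℝ => (π * (1 + (x - l) ^ 2))⁻¹ * Real.log ((x - c) ^ 2 + d ^ 2) := by
  have := (integrable_cauchy_log l c hd).const_mul π⁻¹
  refine this.congr (Eventually.of_forall fun x => ?_)
  simp only [mul_inv]
  ring

lemma integrable_pcauchy (l : ℝ) :
    Integrable fun x : ℝ => (π * (1 + (x - l) ^ 2))⁻¹ := by
  have := (integrable_cauchy l).const_mul π⁻¹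
  refine this.congr (Eventually.of_forall fun x => ?_)
  simp only [mul_inv]

lemma integral_pcauchy (l : ℝ) : ∫ x : ℝ, (π * (1 + (x - l) ^ 2))⁻¹ = 1 := by
  simp only [mul_inv]
  rw [integral_const_mul, integral_cauchy, inv_mul_cancel₀ pi_ne_zero]

lemma key_integral (l c : ℝ) {d : ℝ} (hd : 0 < d) :
    ∫ x : ℝ, (π * (1 + (x - l) ^ 2))⁻¹ * Real.log ((x - c) ^ 2 + d ^ 2)
      = Real.log ((l - c) ^ 2 + (1 + d) ^ 2) := by
  set p : ℝ → ℝ := fun x => (π * (1 + (x - l) ^ 2))⁻¹ with hp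
  have hppos : ∀ x, 0 < p x := fun x => by
    rw [hp]; positivity
  have hpcont : Continuous p := by
    rw [hp]; exact Continuous.inv₀ (by fun_prop) (fun x => by positivity)
  set φ : ℝ → ℝ := fun t => ∫ x : ℝ, p x * Real.log ((x - c) ^ 2 + t ^ 2) with hφ
  set ψ : ℝ → ℝ := fun t => Real.log ((l - c) ^ 2 + (1 + t) ^ 2) with hψ
  -- derivative of φ
  have hφderiv : ∀ t : ℝ, 0 < t →
      HasDerivAt φ (2 * (1 + t) / ((l - c) ^ 2 + (1 + t) ^ 2)) t := by
    intro t₀ ht₀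
    have hball : ∀ t ∈ Metric.ball t₀ (t₀ / 2), t₀ / 2 < t := by
      intro t ht
      rw [Metric.mem_ball, Real.dist_eq, abs_lt] at ht
      linarith [ht.1]
    have main := hasDerivAt_integral_of_dominated_loc_of_deriv_le
      (F := fun t x => p x * Real.log ((x - c) ^ 2 + t ^ 2))
      (F' := fun t x => p x * (2 * t / ((x - c) ^ 2 + t ^ 2)))
      (x₀ := t₀) (s := Metric.ball t₀ (t₀ / 2)) (bound := fun x => p x * (4 / t₀))
      (Metric.ball_mem_nhds t₀ (half_pos ht₀))
      (by
        filter_upwards [Metric.ball_mem_nhds t₀ (half_pos ht₀)] with t ht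
        have h1 : t₀ / 2 < t := hball t ht
        have ht' : 0 < t := lt_trans (half_pos ht₀) h1
        refine (Continuous.aestronglyMeasurable ?_)
        exact hpcont.mul (Continuous.log (by fun_prop) (fun x => by positivity)))
      (by
        have := integrable_pcauchy_log l c ht₀
        exact this.congr (Eventually.of_forall fun x => rfl))
      (by
        refine Continuous.aestronglyMeasurable ?_
        refine hpcont.mul (Continuous.div continuous_const (by fun_prop) (fun x => by positivity)))
      (by
        filter_upwards with x t ht
        have h1 : t₀ / 2 < t := hball t ht
        have ht' : 0 < t := lt_trans (half_pos ht₀) h1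
        rw [Real.norm_eq_abs, abs_mul, abs_of_pos (hppos x), abs_of_nonneg (by positivity)]
        refine mul_le_mul_of_nonneg_left ?_ (hppos x).le
        rw [div_le_div_iff₀ (by positivity) ht₀]
        nlinarith [sq_nonneg (x - c)])
      ((integrable_pcauchy l).mul_const (4 / t₀))
      (by
        filter_upwards with x t ht
        have h1 : t₀ / 2 < t := hball t ht
        have ht' : 0 < t := lt_trans (half_pos ht₀) h1
        have hinner : HasDerivAt (fun s : ℝ => (x - c) ^ 2 + s ^ 2) (2 * t) t := by
          simpa using ((hasDerivAt_id t).pow 2).const_add ((x - c) ^ 2)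
        have hlog : HasDerivAt (fun s : ℝ => Real.log ((x - c) ^ 2 + s ^ 2))
            (2 * t / ((x - c) ^ 2 + t ^ 2)) t := hinner.log (by positivity)
        simpa using hlog.const_mul (p x))
    obtain ⟨-, hder⟩ := main
    have hval : (∫ x : ℝ, p x * (2 * t₀ / ((x - c) ^ 2 + t₀ ^ 2)))
        = 2 * (1 + t₀) / ((l - c) ^ 2 + (1 + t₀) ^ 2) := by
      have heq : ∀ x : ℝ, p x * (2 * t₀ / ((x - c) ^ 2 + t₀ ^ 2))
          = (2 * t₀ / π) * ((1 + (x - l) ^ 2) * ((x - c) ^ 2 + t₀ ^ 2))⁻¹ := by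
        intro x
        rw [hp]
        have h1 : (1 : ℝ) + (x - l) ^ 2 ≠ 0 := by positivity
        have h2 : (x - c) ^ 2 + t₀ ^ 2 ≠ 0 := by positivity
        field_simp
      rw [integral_congr_ae (Eventually.of_forall heq), integral_const_mul, ratint l c ht₀]
      have h3 : (l - c) ^ 2 + (1 + t₀) ^ 2 ≠ 0 := by positivity
      field_simp
    rw [hval] at hder
    exact hder
  -- derivative of ψ
  have hψderiv : ∀ t : ℝ, 0 < t →
      HasDerivAt ψ (2 * (1 + t) / ((l - c) ^ 2 + (1 + t) ^ 2)) t := by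
    intro t ht
    have hinner : HasDerivAt (fun s : ℝ => (l - c) ^ 2 + (1 + s) ^ 2) (2 * (1 + t)) t := by
      have h0 : HasDerivAt (fun s : ℝ => 1 + s) 1 t := (hasDerivAt_id t).const_add 1
      simpa using (h0.pow 2).const_add ((l - c) ^ 2)
    have := hinner.log (by positivity)
    simpa [hψ] using this
  -- h := φ - ψ is constant on (0, ∞)
  have hconst : ∀ t : ℝ, d ≤ t → φ d - ψ d = φ t - ψ t := by
    intro t htd
    rcases eq_or_lt_of_le htd with h | h
    · rw [h]
    have hc := constant_of_has_deriv_right_zero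
      (f := fun s => φ s - ψ s) (a := d) (b := t)
      (fun s hs => by
        have hs0 : 0 < s := lt_of_lt_of_le hd hs.1
        exact ((hφderiv s hs0).sub (hψderiv s hs0)).continuousAt.continuousWithinAt)
      (fun s hs => by
        have hs0 : 0 < s := lt_of_lt_of_le hd hs.1
        have h2 := (hφderiv s hs0).sub (hψderiv s hs0)
        rw [sub_self] at h2
        exact h2.hasDerivWithinAt)
    exact (hc t ⟨htd, le_refl t⟩).symm
  -- limits at infinity
  have hE1 : Tendsto (fun t : ℝ => φ t - 2 * Real.log t) atTop (𝓝 0) := by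
    have hdc : Tendsto (fun t : ℝ => ∫ x : ℝ,
        p x * Real.log (((x - c) / t) ^ 2 + 1)) atTop (𝓝 0) := by
      have h0 : (0 : ℝ) = ∫ x : ℝ, (0 : ℝ) := by simp
      rw [h0]
      refine tendsto_integral_filter_of_dominated_convergence
        (fun x => p x * Real.log ((x - c) ^ 2 + 1)) ?_ ?_ ?_ ?_
      · filter_upwards with t
        refine Continuous.aestronglyMeasurable ?_
        exact hpcont.mul (Continuous.log (by fun_prop) (fun x => by positivity))
      · filter_upwards [eventually_ge_atTop (1 : ℝ)] with t ht
        filter_upwards with x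
        have ht0 : (0 : ℝ) < t := lt_of_lt_of_le one_pos ht
        have harg : (1 : ℝ) ≤ ((x - c) / t) ^ 2 + 1 := by nlinarith [sq_nonneg ((x - c) / t)]
        rw [Real.norm_eq_abs, abs_mul, abs_of_pos (hppos x),
          abs_of_nonneg (Real.log_nonneg harg)]
        refine mul_le_mul_of_nonneg_left ?_ (hppos x).le
        refine Real.log_le_log (by positivity) ?_
        have h2 : ((x - c) / t) ^ 2 ≤ (x - c) ^ 2 := by
          rw [div_pow, div_le_iff₀ (by positivity : (0:ℝ) < t ^ 2)]
          nlinarith [sq_nonneg (x - c), mul_le_mul_of_nonneg_left (by nlinarith : (1:ℝ) ≤ t ^ 2) (sq_nonneg (x - c))]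
        linarith
      · have := (integrable_cauchy_log l c one_pos).const_mul π⁻¹
        refine this.congr (Eventually.of_forall fun x => ?_)
        simp only [hp, mul_inv, one_pow]
        ring
      · filter_upwards with x
        have harg : Tendsto (fun t : ℝ => ((x - c) / t) ^ 2 + 1) atTop (𝓝 1) := by
          have h1 : Tendsto (fun t : ℝ => (x - c) / t) atTop (𝓝 0) :=
            tendsto_const_nhds.div_atTop tendsto_id
          have := (h1.pow 2).add_const 1
          simpa using this
        have hl : Tendsto (fun t : ℝ => Real.log (((x - c) / t) ^ 2 + 1)) atTop (𝓝 0) := by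
          have := (Real.continuousAt_log one_ne_zero).tendsto.comp harg
          simpa [Function.comp_def] using this
        simpa using hl.const_mul (p x)
    refine hdc.congr' ?_
    filter_upwards [eventually_gt_atTop (0 : ℝ)] with t ht
    have heq : ∀ x : ℝ, p x * Real.log (((x - c) / t) ^ 2 + 1)
        = p x * Real.log ((x - c) ^ 2 + t ^ 2) - p x * (2 * Real.log t) := by
      intro x
      have h1 : ((x - c) / t) ^ 2 + 1 = ((x - c) ^ 2 + t ^ 2) / t ^ 2 := by
        field_simp
      rw [h1, Real.log_div (by positivity) (by positivity), ← mul_sub]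
      congr 1
      rw [show (t : ℝ) ^ 2 = t ^ (2 : ℕ) from rfl, Real.log_pow]
      push_cast
      ring
    have hps : ∫ x : ℝ, p x = 1 := integral_pcauchy l
    rw [integral_congr_ae (Eventually.of_forall heq),
      integral_sub (integrable_pcauchy_log l c ht) ((integrable_pcauchy l).mul_const _),
      integral_mul_const, hps, one_mul]
  have hE2 : Tendsto (fun t : ℝ => ψ t - 2 * Real.log t) atTop (𝓝 0) := by
    set g : ℝ → ℝ := fun s => Real.log (((l - c) * s) ^ 2 + (s + 1) ^ 2) with hg
    have hgt : Tendsto g (𝓝 0) (𝓝 0) := by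
      have hca : ContinuousAt g 0 := by
        refine ContinuousAt.log (by fun_prop) ?_
        norm_num
      have hg0 : g 0 = 0 := by simp [hg]
      simpa [hg0] using hca.tendsto
    refine (hgt.comp tendsto_inv_atTop_zero).congr' ?_
    filter_upwards [eventually_gt_atTop (0 : ℝ)] with t ht
    have h1 : ((l - c) * t⁻¹) ^ 2 + (t⁻¹ + 1) ^ 2
        = ((l - c) ^ 2 + (1 + t) ^ 2) / t ^ 2 := by
      field_simp
    simp only [Function.comp, hg]
    rw [h1, Real.log_div (by positivity) (by positivity), hψ]
    rw [show (t : ℝ) ^ 2 = t ^ (2 : ℕ) from rfl, Real.log_pow]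
    push_cast
    ring
  have hzero : Tendsto (fun t : ℝ => φ t - ψ t) atTop (𝓝 0) := by
    have := hE1.sub hE2
    simp only [sub_sub_sub_cancel_right, sub_zero] at this
    simpa using this
  have hcz : Tendsto (fun _ : ℝ => φ d - ψ d) atTop (𝓝 0) := by
    refine hzero.congr' ?_
    filter_upwards [eventually_ge_atTop d] with t ht
    exact (hconst t ht).symm
  have hfinal : φ d - ψ d = 0 := tendsto_nhds_unique tendsto_const_nhds hcz
  have hfin2 : φ d = ψ d := by linarith
  exact hfin2


lemma block_integrable (l a : ℝ) {b : ℝ} (hb : 0 < b) :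
    Integrable fun x : ℝ => (π * (1 + (x - l) ^ 2))⁻¹ *
      (Real.log ((x - a) ^ 2 + b ^ 2) - Real.log (x ^ 2 + 1) -
        Real.log ((x - 1) ^ 2 + 1) - Real.log π) := by
  have i1 := integrable_pcauchy_log l a hb
  have i2 := integrable_pcauchy_log l 0 one_pos
  simp only [sub_zero, one_pow] at i2
  have i3 := integrable_pcauchy_log l 1 one_pos
  simp only [one_pow] at i3
  have i4 := (integrable_pcauchy l).mul_const (Real.log π)
  refine (((i1.sub i2).sub i3).sub i4).congr (Eventually.of_forall fun x => ?_)
  simp only [Pi.sub_apply]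
  ring

lemma block (l a : ℝ) {b : ℝ} (hb : 0 < b) :
    ∫ x : ℝ, (π * (1 + (x - l) ^ 2))⁻¹ *
      (Real.log ((x - a) ^ 2 + b ^ 2) - Real.log (x ^ 2 + 1) -
        Real.log ((x - 1) ^ 2 + 1) - Real.log π)
    = Real.log ((l - a) ^ 2 + (1 + b) ^ 2) - Real.log (l ^ 2 + 4) -
      Real.log ((l - 1) ^ 2 + 4) - Real.log π := by
  have i1 := integrable_pcauchy_log l a hb
  have i2 := integrable_pcauchy_log l 0 one_pos
  simp only [sub_zero, one_pow] at i2
  have i3 := integrable_pcauchy_log l 1 one_pos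
  simp only [one_pow] at i3
  have i4 := (integrable_pcauchy l).mul_const (Real.log π)
  have k1 := key_integral l a hb
  have k2 := key_integral l 0 one_pos
  simp only [sub_zero, one_pow, show ((1:ℝ)+1)^2 = 4 by norm_num] at k2
  have k3 := key_integral l 1 one_pos
  simp only [one_pow, show ((1:ℝ)+1)^2 = 4 by norm_num] at k3
  have hlogpi : ∫ x : ℝ, (π * (1 + (x - l) ^ 2))⁻¹ * Real.log π = Real.log π := by
    rw [integral_mul_const, integral_pcauchy, one_mul]
  have heq : ∀ x : ℝ, (π * (1 + (x - l) ^ 2))⁻¹ *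
      (Real.log ((x - a) ^ 2 + b ^ 2) - Real.log (x ^ 2 + 1) -
        Real.log ((x - 1) ^ 2 + 1) - Real.log π)
      = (((π * (1 + (x - l) ^ 2))⁻¹ * Real.log ((x - a) ^ 2 + b ^ 2) -
          (π * (1 + (x - l) ^ 2))⁻¹ * Real.log (x ^ 2 + 1)) -
          (π * (1 + (x - l) ^ 2))⁻¹ * Real.log ((x - 1) ^ 2 + 1)) -
          (π * (1 + (x - l) ^ 2))⁻¹ * Real.log π := fun x => by ring
  have i12 : Integrable (fun x : ℝ =>
      (π * (1 + (x - l) ^ 2))⁻¹ * Real.log ((x - a) ^ 2 + b ^ 2) -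
      (π * (1 + (x - l) ^ 2))⁻¹ * Real.log (x ^ 2 + 1)) := i1.sub i2
  have i123 : Integrable (fun x : ℝ =>
      ((π * (1 + (x - l) ^ 2))⁻¹ * Real.log ((x - a) ^ 2 + b ^ 2) -
      (π * (1 + (x - l) ^ 2))⁻¹ * Real.log (x ^ 2 + 1)) -
      (π * (1 + (x - l) ^ 2))⁻¹ * Real.log ((x - 1) ^ 2 + 1)) := i12.sub i3
  rw [integral_congr_ae (Eventually.of_forall heq),
    integral_sub i123 i4, integral_sub i12 i3,
    integral_sub i1 i2, k1, k2, k3, hlogpi]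


end DualPotAux

open DualPotAux in
/-- The dual Legendre potential of the negentropy of the mixture of `p_{0,1}` and
`p_{1,1}`, expressed in the `θ`-coordinate. -/

theorem dual_potential_theta (F η : ℝ → ℝ)
    (hF : F = fun θ : ℝ =>
      ∫ x : ℝ, ((1 - θ) * (1 / (π * (1 + x ^ 2))) + θ * (1 / (π * (1 + (x - 1) ^ 2)))) *
        Real.log ((1 - θ) * (1 / (π * (1 + x ^ 2))) +
          θ * (1 / (π * (1 + (x - 1) ^ 2)))))
    (hη : η = fun θ : ℝ =>
      Real.log ((2 * Real.sqrt (1 + θ - θ ^ 2) + θ + 2) /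
        (2 * Real.sqrt (1 + θ - θ ^ 2) - θ + 3)))
    (θ : ℝ) (hθ : θ ∈ Set.Ioo (0 : ℝ) 1) :
    θ * η θ - F θ =
      Real.log (20 * π / (2 * Real.sqrt (1 + θ - θ ^ 2) - θ + 3)) := by
  obtain ⟨hθ1, hθ2⟩ := hθ
  simp only [hF, hη]
  have hq : (0 : ℝ) < 1 + θ - θ ^ 2 := by nlinarith
  set b : ℝ := Real.sqrt (1 + θ - θ ^ 2) with hbdef
  have hbsq : b ^ 2 = 1 + θ - θ ^ 2 := Real.sq_sqrt hq.le
  have hbpos : 0 < b := Real.sqrt_pos.2 hq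
  set a : ℝ := 1 - θ with hadef
  -- pointwise identity
  have hpt : ∀ x : ℝ,
      ((1 - θ) * (1 / (π * (1 + x ^ 2))) + θ * (1 / (π * (1 + (x - 1) ^ 2)))) *
        Real.log ((1 - θ) * (1 / (π * (1 + x ^ 2))) +
          θ * (1 / (π * (1 + (x - 1) ^ 2))))
      = (1 - θ) * ((π * (1 + (x - 0) ^ 2))⁻¹ *
          (Real.log ((x - a) ^ 2 + b ^ 2) - Real.log (x ^ 2 + 1) -
            Real.log ((x - 1) ^ 2 + 1) - Real.log π)) +
        θ * ((π * (1 + (x - 1) ^ 2))⁻¹ *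
          (Real.log ((x - a) ^ 2 + b ^ 2) - Real.log (x ^ 2 + 1) -
            Real.log ((x - 1) ^ 2 + 1) - Real.log π)) := by
    intro x
    have h0 : (0 : ℝ) < 1 + x ^ 2 := by positivity
    have h1 : (0 : ℝ) < 1 + (x - 1) ^ 2 := by positivity
    have hnum : (x - a) ^ 2 + b ^ 2
        = (1 - θ) * (1 + (x - 1) ^ 2) + θ * (1 + x ^ 2) := by
      rw [hadef]
      linear_combination hbsq
    have hnumpos : (0 : ℝ) < (x - a) ^ 2 + b ^ 2 := by positivity
    have hS : (1 - θ) * (1 / (π * (1 + x ^ 2))) + θ * (1 / (π * (1 + (x - 1) ^ 2)))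
        = ((x - a) ^ 2 + b ^ 2) / (π * ((x ^ 2 + 1) * ((x - 1) ^ 2 + 1))) := by
      rw [hnum]
      have hπ : π ≠ 0 := pi_ne_zero
      field_simp
      ring
    have hlog : Real.log ((1 - θ) * (1 / (π * (1 + x ^ 2))) +
          θ * (1 / (π * (1 + (x - 1) ^ 2))))
        = Real.log ((x - a) ^ 2 + b ^ 2) - Real.log (x ^ 2 + 1) -
            Real.log ((x - 1) ^ 2 + 1) - Real.log π := by
      rw [hS, Real.log_div (ne_of_gt hnumpos) (by positivity),
        Real.log_mul pi_ne_zero (by positivity),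
        Real.log_mul (by positivity) (by positivity)]
      ring
    rw [hlog]
    ring
  have hI : (∫ x : ℝ,
      ((1 - θ) * (1 / (π * (1 + x ^ 2))) + θ * (1 / (π * (1 + (x - 1) ^ 2)))) *
        Real.log ((1 - θ) * (1 / (π * (1 + x ^ 2))) +
          θ * (1 / (π * (1 + (x - 1) ^ 2)))))
      = (1 - θ) * (Real.log ((0 - a) ^ 2 + (1 + b) ^ 2) - Real.log (0 ^ 2 + 4) -
          Real.log ((0 - 1) ^ 2 + 4) - Real.log π) +
        θ * (Real.log ((1 - a) ^ 2 + (1 + b) ^ 2) - Real.log (1 ^ 2 + 4) -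
          Real.log ((1 - 1) ^ 2 + 4) - Real.log π) := by
    rw [integral_congr_ae (Eventually.of_forall hpt),
      integral_add ((block_integrable 0 a hbpos).const_mul (1 - θ))
        ((block_integrable 1 a hbpos).const_mul θ),
      integral_const_mul, integral_const_mul, block 0 a hbpos, block 1 a hbpos]
  rw [hI]
  -- final algebra with logarithms
  have e0 : (0 - a) ^ 2 + (1 + b) ^ 2 = 2 * b - θ + 3 := by
    rw [hadef]; linear_combination hbsq
  have e1 : (1 - a) ^ 2 + (1 + b) ^ 2 = 2 * b + θ + 2 := by
    rw [hadef]; linear_combination hbsq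
  have hD : (0 : ℝ) < 2 * b - θ + 3 := by linarith
  have hN : (0 : ℝ) < 2 * b + θ + 2 := by linarith
  rw [e0, e1,
    show ((0:ℝ) - 1) ^ 2 + 4 = 5 by norm_num,
    show ((1:ℝ) - 1) ^ 2 + 4 = 4 by norm_num,
    show ((0:ℝ)) ^ 2 + 4 = 4 by norm_num,
    show ((1:ℝ)) ^ 2 + 4 = 5 by norm_num,
    Real.log_div (ne_of_gt hN) (ne_of_gt hD),
    Real.log_div (by positivity) (ne_of_gt hD),
    Real.log_mul (by norm_num : (20:ℝ) ≠ 0) pi_ne_zero,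
    show (20 : ℝ) = 4 * 5 by norm_num,
    Real.log_mul (by norm_num : (4:ℝ) ≠ 0) (by norm_num : (5:ℝ) ≠ 0)]
  ring
end

section
/- Let K* ⊆ ℝ^d be the dual cone K* = {y ∈ ℝ^d : ∀ x ∈ K, ⟨x,y⟩ ≥ 0} of a set K ⊆ ℝ^d, assume K* has nonempty interior, and define χ(x) = ∫_{K*} exp(−⟨x,y⟩) dy ∈ [0,∞]. Then χ is strictly logarithmically convex on its finiteness domain: for all x1 ≠ x2 with χ(x1) < ∞ and χ(x2) < ∞, and all t ∈ (0,1), one has χ(t·x1 + (1−t)·x2) < χ(x1)^t · χ(x2)^{1−t}. -/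
open MeasureTheory Real
open scoped RealInnerProductSpace ENNReal

/-- The dual cone of a subset `K` of Euclidean space. -/
def dualConeSet {d : ℕ} (K : Set (EuclideanSpace ℝ (Fin d))) :
    Set (EuclideanSpace ℝ (Fin d)) :=
  {y | ∀ x ∈ K, 0 ≤ ⟪x, y⟫}

/-- The characteristic function `χ(x) = ∫_{K*} exp(−⟨x,y⟩) dy` of a cone,
with values in `[0,∞]`. -/
noncomputable def c023char {d : ℕ} (K : Set (EuclideanSpace ℝ (Fin d)))
    (x : EuclideanSpace ℝ (Fin d)) : ℝ≥0∞ :=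
  ∫⁻ y in dualConeSet K, ENNReal.ofReal (Real.exp (-⟪x, y⟫))

/-- Weighted AM-GM for two reals. -/
lemma c023_young_le {p q t : ℝ} (hp : 0 ≤ p) (hq : 0 ≤ q) (ht0 : 0 ≤ t) (ht1 : t ≤ 1) :
    p ^ t * q ^ (1 - t) ≤ t * p + (1 - t) * q :=
  Real.geom_mean_le_arith_mean2_weighted ht0 (by linarith) hp hq (by ring)

/-- Strict weighted AM-GM for two distinct positive reals. -/
lemma c023_young_lt {p q t : ℝ} (hp : 0 < p) (hq : 0 < q) (hpq : p ≠ q)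
    (ht0 : 0 < t) (ht1 : t < 1) :
    p ^ t * q ^ (1 - t) < t * p + (1 - t) * q := by
  have hlog : Real.log p ≠ Real.log q := fun h =>
    hpq (by rw [← Real.exp_log hp, ← Real.exp_log hq, h])
  have h := strictConvexOn_exp.2 (Set.mem_univ (Real.log p)) (Set.mem_univ (Real.log q))
    hlog ht0 (show (0:ℝ) < 1 - t by linarith) (show t + (1 - t) = 1 by ring)
  simp only [smul_eq_mul, Real.exp_log hp, Real.exp_log hq] at h
  calc p ^ t * q ^ (1 - t)
      = Real.exp (t * Real.log p + (1 - t) * Real.log q) := by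
        rw [Real.exp_add, Real.rpow_def_of_pos hp, Real.rpow_def_of_pos hq,
          mul_comm (Real.log p) t, mul_comm (Real.log q) (1 - t)]
    _ < t * p + (1 - t) * q := h

/-- An affine hyperplane has Lebesgue measure zero. -/
lemma c023_hyperplane_volume_zero {d : ℕ} (v : EuclideanSpace ℝ (Fin d)) (hv : v ≠ 0) (C : ℝ) :
    volume {y : EuclideanSpace ℝ (Fin d) | ⟪v, y⟫ = C} = 0 := by
  set f : EuclideanSpace ℝ (Fin d) →ᵃ[ℝ] ℝ :=
    ((innerSL ℝ v : EuclideanSpace ℝ (Fin d) →L[ℝ] ℝ) :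
      EuclideanSpace ℝ (Fin d) →ₗ[ℝ] ℝ).toAffineMap with hf
  set s : AffineSubspace ℝ (EuclideanSpace ℝ (Fin d)) :=
    AffineSubspace.comap f (AffineSubspace.mk' C (⊥ : Submodule ℝ ℝ)) with hs
  have hmem : ∀ y : EuclideanSpace ℝ (Fin d), y ∈ s ↔ ⟪v, y⟫ = C := by
    intro y
    rw [hs, AffineSubspace.mem_comap, AffineSubspace.mem_mk']
    simp only [vsub_eq_sub, Submodule.mem_bot, sub_eq_zero]
    exact Iff.rfl
  have hset : {y : EuclideanSpace ℝ (Fin d) | ⟪v, y⟫ = C}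
      = (s : Set (EuclideanSpace ℝ (Fin d))) := by
    ext y
    exact (hmem y).symm
  have hvv : ⟪v, v⟫ ≠ 0 := inner_self_ne_zero.mpr hv
  have hstop : s ≠ ⊤ := by
    intro htop
    have hy : ((C + 1) / ⟪v, v⟫) • v ∈ s := by rw [htop]; trivial
    have h2 : ⟪v, ((C + 1) / ⟪v, v⟫) • v⟫ = C := (hmem _).mp hy
    rw [real_inner_smul_right, div_mul_cancel₀ _ hvv] at h2
    linarith
  rw [hset]
  exact Measure.addHaar_affineSubspace volume s hstop

set_option maxHeartbeats 1000000 in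
/-- The characteristic function is strictly logarithmically convex on its
finiteness domain, provided the dual cone has nonempty interior. -/
theorem char_strictly_logConvex {d : ℕ} (K : Set (EuclideanSpace ℝ (Fin d)))
    (hint : (interior (dualConeSet K)).Nonempty)
    (x1 x2 : EuclideanSpace ℝ (Fin d)) (hne : x1 ≠ x2)
    (h1 : c023char K x1 < ⊤) (h2 : c023char K x2 < ⊤)
    (t : ℝ) (ht : t ∈ Set.Ioo (0 : ℝ) 1) :
    c023char K (t • x1 + (1 - t) • x2) <
      c023char K x1 ^ t * c023char K x2 ^ (1 - t) := by
  obtain ⟨ht0, ht1⟩ := ht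
  set S := dualConeSet K with hSdef
  -- continuity/measurability of the integrands
  have hce : ∀ x : EuclideanSpace ℝ (Fin d),
      Continuous fun y : EuclideanSpace ℝ (Fin d) => Real.exp (-⟪x, y⟫) := fun x =>
    Real.continuous_exp.comp (continuous_const.inner continuous_id).neg
  have hcont : ∀ x : EuclideanSpace ℝ (Fin d),
      Measurable fun y : EuclideanSpace ℝ (Fin d) => ENNReal.ofReal (Real.exp (-⟪x, y⟫)) :=
    fun x => (ENNReal.continuous_ofReal.comp (hce x)).measurable
  -- positivity of the characteristic function
  have hpos : ∀ x : EuclideanSpace ℝ (Fin d), 0 < c023char K x := by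
    intro x
    have hsub : (∫⁻ y in interior S, ENNReal.ofReal (Real.exp (-⟪x, y⟫)))
        ≤ c023char K x := lintegral_mono_set interior_subset
    refine lt_of_lt_of_le ?_ hsub
    rw [lintegral_pos_iff_support (hcont x)]
    have hsupp : (Function.support fun y : EuclideanSpace ℝ (Fin d) =>
        ENNReal.ofReal (Real.exp (-⟪x, y⟫))) = Set.univ :=
      Set.eq_univ_of_forall fun y => (ENNReal.ofReal_pos.mpr (Real.exp_pos _)).ne'
    rw [hsupp, Measure.restrict_apply_univ]
    exact isOpen_interior.measure_pos volume hint
  set A := (c023char K x1).toReal with hA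
  set B := (c023char K x2).toReal with hB
  have hA0 : 0 < A := ENNReal.toReal_pos (hpos x1).ne' h1.ne
  have hB0 : 0 < B := ENNReal.toReal_pos (hpos x2).ne' h2.ne
  have hχ1 : c023char K x1 = ENNReal.ofReal A := (ENNReal.ofReal_toReal h1.ne).symm
  have hχ2 : c023char K x2 = ENNReal.ofReal B := (ENNReal.ofReal_toReal h2.ne).symm
  set c1 : ℝ := t * A ^ (t - 1) * B ^ (1 - t) with hc1
  set c2 : ℝ := (1 - t) * A ^ t * B ^ (-t) with hc2
  have hc1pos : 0 < c1 :=
    mul_pos (mul_pos ht0 (Real.rpow_pos_of_pos hA0 _)) (Real.rpow_pos_of_pos hB0 _)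
  have hc2pos : 0 < c2 :=
    mul_pos (mul_pos (by linarith) (Real.rpow_pos_of_pos hA0 _)) (Real.rpow_pos_of_pos hB0 _)
  have hABt : 0 < A ^ t * B ^ (1 - t) :=
    mul_pos (Real.rpow_pos_of_pos hA0 _) (Real.rpow_pos_of_pos hB0 _)
  set F : EuclideanSpace ℝ (Fin d) → ℝ :=
    fun y => Real.exp (-⟪t • x1 + (1 - t) • x2, y⟫) with hF
  set G : EuclideanSpace ℝ (Fin d) → ℝ :=
    fun y => c1 * Real.exp (-⟪x1, y⟫) + c2 * Real.exp (-⟪x2, y⟫) with hG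
  have hinner : ∀ y : EuclideanSpace ℝ (Fin d),
      ⟪t • x1 + (1 - t) • x2, y⟫ = t * ⟪x1, y⟫ + (1 - t) * ⟪x2, y⟫ := by
    intro y; rw [inner_add_left, real_inner_smul_left, real_inner_smul_left]
  have e1 : A ^ (t - 1) = A ^ t / A := by rw [Real.rpow_sub hA0, Real.rpow_one]
  have e2 : B ^ (-t) = B ^ (1 - t) / B := by
    rw [show -t = (1 - t) - 1 by ring, Real.rpow_sub hB0, Real.rpow_one]
  have hstep1 : ∀ y : EuclideanSpace ℝ (Fin d),
      (Real.exp (-⟪x1, y⟫) / A) ^ t * (Real.exp (-⟪x2, y⟫) / B) ^ (1 - t)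
        * (A ^ t * B ^ (1 - t)) = F y := by
    intro y
    simp only [hF]
    rw [hinner y, Real.div_rpow (Real.exp_pos _).le hA0.le,
      Real.div_rpow (Real.exp_pos _).le hB0.le, ← Real.exp_mul, ← Real.exp_mul,
      div_mul_div_comm, ← Real.exp_add, div_mul_cancel₀ _ hABt.ne']
    congr 1
    ring
  have hstep2 : ∀ y : EuclideanSpace ℝ (Fin d),
      (t * (Real.exp (-⟪x1, y⟫) / A) + (1 - t) * (Real.exp (-⟪x2, y⟫) / B))
        * (A ^ t * B ^ (1 - t)) = G y := by
    intro y
    simp only [hG, hc1, hc2]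
    rw [e1, e2]
    field_simp
  have hFG_le : ∀ y : EuclideanSpace ℝ (Fin d), F y ≤ G y := by
    intro y
    rw [← hstep1 y, ← hstep2 y]
    exact mul_le_mul_of_nonneg_right
      (c023_young_le (div_pos (Real.exp_pos _) hA0).le (div_pos (Real.exp_pos _) hB0).le
        ht0.le ht1.le) hABt.le
  have hFG_lt : ∀ y : EuclideanSpace ℝ (Fin d),
      ⟪x2 - x1, y⟫ ≠ Real.log A - Real.log B → F y < G y := by
    intro y hy
    rw [← hstep1 y, ← hstep2 y]
    refine mul_lt_mul_of_pos_right
      (c023_young_lt (div_pos (Real.exp_pos _) hA0) (div_pos (Real.exp_pos _) hB0)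
        ?_ ht0 ht1) hABt
    intro hpq
    apply hy
    have hlogs := congrArg Real.log hpq
    rw [Real.log_div (Real.exp_pos _).ne' hA0.ne', Real.log_div (Real.exp_pos _).ne' hB0.ne',
      Real.log_exp, Real.log_exp] at hlogs
    rw [inner_sub_left]
    linarith
  -- the integral of G
  have hGpt : ∀ y : EuclideanSpace ℝ (Fin d), ENNReal.ofReal (G y)
      = ENNReal.ofReal c1 * ENNReal.ofReal (Real.exp (-⟪x1, y⟫))
        + ENNReal.ofReal c2 * ENNReal.ofReal (Real.exp (-⟪x2, y⟫)) := by
    intro y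
    rw [hG]
    rw [ENNReal.ofReal_add (mul_nonneg hc1pos.le (Real.exp_pos _).le)
      (mul_nonneg hc2pos.le (Real.exp_pos _).le),
      ENNReal.ofReal_mul hc1pos.le, ENNReal.ofReal_mul hc2pos.le]
  have hGint : (∫⁻ y in S, ENNReal.ofReal (G y))
      = ENNReal.ofReal c1 * c023char K x1 + ENNReal.ofReal c2 * c023char K x2 := by
    simp_rw [hGpt]
    rw [lintegral_add_left ((hcont x1).const_mul _),
      lintegral_const_mul _ (hcont x1), lintegral_const_mul _ (hcont x2)]
    rfl
  have hGval : ENNReal.ofReal c1 * c023char K x1 + ENNReal.ofReal c2 * c023char K x2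
      = ENNReal.ofReal (A ^ t * B ^ (1 - t)) := by
    rw [hχ1, hχ2, ← ENNReal.ofReal_mul hc1pos.le, ← ENNReal.ofReal_mul hc2pos.le,
      ← ENNReal.ofReal_add (mul_nonneg hc1pos.le hA0.le) (mul_nonneg hc2pos.le hB0.le)]
    congr 1
    rw [hc1, hc2, e1, e2]
    field_simp
    ring
  have hGfin : (∫⁻ y in S, ENNReal.ofReal (G y)) < ⊤ := by
    rw [hGint, hGval]; exact ENNReal.ofReal_lt_top
  -- the strictness set
  have hv : x2 - x1 ≠ 0 := sub_ne_zero_of_ne hne.symm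
  set H : Set (EuclideanSpace ℝ (Fin d)) :=
    {y | ⟪x2 - x1, y⟫ = Real.log A - Real.log B} with hHdef
  have hHmeas : MeasurableSet H :=
    (measurableSet_singleton (Real.log A - Real.log B)).preimage
      (continuous_const.inner continuous_id).measurable
  have hHzero : volume H = 0 := c023_hyperplane_volume_zero _ hv _
  set sS : Set (EuclideanSpace ℝ (Fin d)) := interior S \ H with hsSdef
  have hsSmeas : MeasurableSet sS := isOpen_interior.measurableSet.diff hHmeas
  have hsSpos : volume.restrict S sS ≠ 0 := by
    rw [Measure.restrict_apply hsSmeas,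
      Set.inter_eq_self_of_subset_left (Set.diff_subset.trans interior_subset)]
    rw [measure_diff_null hHzero]
    exact (isOpen_interior.measure_pos volume hint).ne'
  -- main strict inequality
  have hGmeas : AEMeasurable (fun y => ENNReal.ofReal (G y)) (volume.restrict S) :=
    (ENNReal.continuous_ofReal.comp
      ((continuous_const.mul (hce x1)).add (continuous_const.mul (hce x2)))).measurable.aemeasurable
  have hmain : (∫⁻ y in S, ENNReal.ofReal (F y)) < ∫⁻ y in S, ENNReal.ofReal (G y) := by
    refine lintegral_strict_mono_of_ae_le_of_ae_lt_on hGmeas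
      ?_ (ae_of_all _ fun y => ENNReal.ofReal_le_ofReal (hFG_le y)) hsSpos
      (ae_of_all _ fun y hy => ?_)
    · refine ne_of_lt (lt_of_le_of_lt ?_ hGfin)
      exact lintegral_mono fun y => ENNReal.ofReal_le_ofReal (hFG_le y)
    · exact (ENNReal.ofReal_lt_ofReal_iff_of_nonneg (Real.exp_pos _).le).mpr
        (hFG_lt y fun h => hy.2 h)
  calc c023char K (t • x1 + (1 - t) • x2)
      = ∫⁻ y in S, ENNReal.ofReal (F y) := rfl
    _ < ∫⁻ y in S, ENNReal.ofReal (G y) := hmain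
    _ = ENNReal.ofReal (A ^ t * B ^ (1 - t)) := by rw [hGint, hGval]
    _ = c023char K x1 ^ t * c023char K x2 ^ (1 - t) := by
        rw [hχ1, hχ2, ENNReal.ofReal_rpow_of_pos hA0, ENNReal.ofReal_rpow_of_pos hB0,
          ENNReal.ofReal_mul (Real.rpow_pos_of_pos hA0 t).le]
end
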